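/- arXiv:2605.16685 — 2 statements merged into one kernel-verified Lean document; each statement's English description precedes it below -/
import Mathlib

section
/- Let y* : ℝ^{d_x} → ℝ^{d_y} be L_y-Lipschitz and let μ > 0. Then every partial derivative of y_μ is Lipschitz with constant d_x L_y / μ: for each i ∈ {1,…,d_y}, j ∈ {1,…,d_x} and all x, z ∈ ℝ^{d_x}, |∂(y_μ)_i/∂x_j (x) − ∂(y_μ)_i/∂x_j (z)| ≤ (d_x L_y / μ) ‖x − z‖. -/
open MeasureTheory Metric
open scoped InnerProductSpace RealInnerProductSpace NNReal
open Filter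
open scoped ENNReal Topology

noncomputable section

/-- `ℝ^n` with the Euclidean norm. -/
abbrev E (n : ℕ) : Type := EuclideanSpace ℝ (Fin n)

/-- Uniform (normalized Lebesgue) probability measure on the closed unit ball of `ℝ^n`. -/
def uniformBall (n : ℕ) : Measure (E n) :=
  (volume (closedBall (0 : E n) 1))⁻¹ • volume.restrict (closedBall (0 : E n) 1)

/-- Uniform (rotation-invariant) probability measure on the unit sphere of `ℝ^n`,
viewed as a measure on the ambient space. -/
def uniformSphere (n : ℕ) : Measure (E n) :=
  ((volume : Measure (E n)).toSphere Set.univ)⁻¹ •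
    Measure.map Subtype.val ((volume : Measure (E n)).toSphere)

/-- Ball smoothing `y_μ` of a map `y : ℝ^{d_x} → ℝ^{d_y}`:
`y_μ(x) = E_{u ~ U(B^{d_x})}[y(x + μ u)]`. -/
def ymu {dx dy : ℕ} (y : E dx → E dy) (μ : ℝ) (x : E dx) : E dy :=
  ∫ u, y (x + μ • u) ∂(uniformBall dx)

/-- Partial gradient `∇_x f` of `f : ℝ^{d_x} × ℝ^{d_y} → ℝ` in its first argument. -/
def gradx {dx dy : ℕ} (f : E dx × E dy → ℝ) (x : E dx) (y : E dy) : E dx :=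
  gradient (fun x' => f (x', y)) x

/-- Partial gradient `∇_y f` of `f : ℝ^{d_x} × ℝ^{d_y} → ℝ` in its second argument. -/
def grady {dx dy : ℕ} (f : E dx × E dy → ℝ) (x : E dx) (y : E dy) : E dy :=
  gradient (fun y' => f (x, y')) y

/-- Smoothed surrogate `F_μ(x) = f(x, y_μ(x))`. -/
def Fmu {dx dy : ℕ} (f : E dx × E dy → ℝ) (y : E dx → E dy) (μ : ℝ) (x : E dx) : ℝ :=
  f (x, ymu y μ x)



section Aux

lemma gamma_midpoint {x : ℝ} (hx : 0 < x) :
    Real.Gamma (x + 1/2) ≤ Real.sqrt (Real.Gamma x * Real.Gamma (x+1)) := by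
  have h1 : (0:ℝ) < Real.Gamma x := Real.Gamma_pos_of_pos hx
  have h2 : (0:ℝ) < Real.Gamma (x+1) := Real.Gamma_pos_of_pos (by linarith)
  have hconv := Real.convexOn_log_Gamma.2 (Set.mem_Ioi.2 hx) (Set.mem_Ioi.2 (by linarith : (0:ℝ) < x + 1))
    (by norm_num : (0:ℝ) ≤ 1/2) (by norm_num : (0:ℝ) ≤ 1/2) (by norm_num)
  have hmid : (1/2 : ℝ) • x + (1/2 : ℝ) • (x+1) = x + 1/2 := by
    simp only [smul_eq_mul]; ring
  rw [hmid] at hconv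
  simp only [Function.comp_apply, smul_eq_mul] at hconv
  have h3 := Real.exp_le_exp.2 hconv
  rw [Real.exp_log (Real.Gamma_pos_of_pos (by linarith))] at h3
  refine h3.trans (le_of_eq ?_)
  rw [← Real.exp_log (Real.sqrt_pos.2 (by positivity) : (0:ℝ) < Real.sqrt (Real.Gamma x * Real.Gamma (x+1))),
    Real.log_sqrt (by positivity), Real.log_mul h1.ne' h2.ne']
  ring_nf

lemma volE_zero : volume (closedBall (0 : E 0) 1) = 1 := by
  have h : closedBall (0 : E 0) 1 = Set.univ := by
    ext x; simp [Subsingleton.elim x 0]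
  have h2 := (EuclideanSpace.volume_preserving_symm_measurableEquiv_toLp (Fin 0)).measure_preimage
    (MeasurableSet.univ (α := Fin 0 → ℝ)).nullMeasurableSet
  simp only [Set.preimage_univ] at h2
  rw [h, h2]
  simp [volume_pi, Measure.pi_univ]

lemma volE_toReal (n : ℕ) [Nonempty (Fin n)] :
    (volume (closedBall (0 : E n) 1)).toReal = Real.sqrt Real.pi ^ n / Real.Gamma (n/2 + 1) := by
  rw [EuclideanSpace.volume_closedBall]
  simp [Fintype.card_fin, ENNReal.toReal_mul, ← ENNReal.ofReal_pow,
    ENNReal.toReal_ofReal (by positivity : (0:ℝ) ≤ Real.sqrt Real.pi ^ n / Real.Gamma (n/2+1))]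

lemma vol_ratio (m : ℕ) :
    2 * (volume (closedBall (0 : E m) 1)).toReal * Real.sqrt (m+1)
      ≤ (m+1) * (volume (closedBall (0 : E (m+1)) 1)).toReal := by
  have hπ : (0:ℝ) < Real.sqrt Real.pi := Real.sqrt_pos.2 Real.pi_pos
  rcases Nat.eq_zero_or_pos m with hm | hm
  · subst hm
    rw [volE_zero, volE_toReal 1]
    have hΓ : Real.Gamma ((1:ℕ)/2 + 1) = Real.sqrt Real.pi / 2 := by
      rw [show ((1:ℕ):ℝ)/2 + 1 = 1/2 + 1 by norm_num, Real.Gamma_add_one (by norm_num),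
        Real.Gamma_one_half_eq]
      ring
    rw [hΓ]
    simp only [ENNReal.toReal_one]
    rw [div_div_eq_mul_div, pow_one]
    rw [show (Real.sqrt Real.pi * 2 / Real.sqrt Real.pi) = 2 by field_simp]
    norm_num
  · -- m ≥ 1
    have : Nonempty (Fin m) := ⟨⟨0, hm⟩⟩
    rw [volE_toReal m, volE_toReal (m+1)]
    set x : ℝ := m/2 + 1 with hxdef
    have hx : 0 < x := by positivity
    have hΓx : 0 < Real.Gamma x := Real.Gamma_pos_of_pos hx
    have hΓx2 : 0 < Real.Gamma (x + 1/2) := Real.Gamma_pos_of_pos (by rw [hxdef]; positivity)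
    have hkey : Real.Gamma (x + 1/2) ≤ Real.Gamma x * Real.sqrt x := by
      have := gamma_midpoint hx
      rwa [Real.Gamma_add_one hx.ne', show Real.Gamma x * (x * Real.Gamma x) = (Real.Gamma x)^2 * x by ring,
        Real.sqrt_mul (by positivity), Real.sqrt_sq hΓx.le] at this
    have hΓeq : Real.Gamma (((m:ℝ)+1)/2 + 1) = Real.Gamma (x + 1/2) := by
      congr 1; rw [hxdef]; ring
    rw [show ((m:ℝ)+1) = ((m+1:ℕ):ℝ) by push_cast; ring] at hΓeq
    rw [hΓeq]
    have lhs_eq : 2 * (Real.sqrt Real.pi ^ m / Real.Gamma x) * Real.sqrt ((m:ℝ)+1)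
        = (2 * Real.sqrt Real.pi ^ m * Real.sqrt ((m:ℝ)+1)) / Real.Gamma x := by ring
    have rhs_eq : ((m:ℝ)+1) * (Real.sqrt Real.pi ^ (m+1) / Real.Gamma (x + 1/2))
        = (Real.sqrt Real.pi ^ (m+1) * ((m:ℝ)+1)) / Real.Gamma (x + 1/2) := by ring
    rw [lhs_eq, rhs_eq, div_le_div_iff₀ hΓx hΓx2]
    calc 2 * Real.sqrt Real.pi ^ m * Real.sqrt ((m:ℝ)+1) * Real.Gamma (x + 1/2)
        ≤ 2 * Real.sqrt Real.pi ^ m * Real.sqrt ((m:ℝ)+1) * (Real.Gamma x * Real.sqrt x) := by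
          apply mul_le_mul_of_nonneg_left hkey (by positivity)
      _ = (Real.sqrt Real.pi ^ m * Real.Gamma x) * (2 * (Real.sqrt ((m:ℝ)+1) * Real.sqrt x)) := by
          ring
      _ ≤ (Real.sqrt Real.pi ^ m * Real.Gamma x) * (Real.sqrt Real.pi * ((m:ℝ)+1)) := by
          apply mul_le_mul_of_nonneg_left ?_ (by positivity)
          have hA : (0:ℝ) ≤ 2 * (Real.sqrt ((m:ℝ)+1) * Real.sqrt x) := by positivity
          have hB : (0:ℝ) ≤ Real.sqrt Real.pi * ((m:ℝ)+1) := by positivity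
          have hπ3 : (3.14:ℝ) ≤ Real.pi := by have := Real.pi_gt_d6; linarith
          have hm1 : (1:ℝ) ≤ (m:ℝ) := by exact_mod_cast hm
          have hsq : (2 * (Real.sqrt ((m:ℝ)+1) * Real.sqrt x))^2 ≤ (Real.sqrt Real.pi * ((m:ℝ)+1))^2 := by
            have e1 : (Real.sqrt ((m:ℝ)+1))^2 = (m:ℝ)+1 := Real.sq_sqrt (by positivity)
            have e2 : (Real.sqrt x)^2 = x := Real.sq_sqrt hx.le
            have e3 : (Real.sqrt Real.pi)^2 = Real.pi := Real.sq_sqrt Real.pi_pos.le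
            have expand : (2 * (Real.sqrt ((m:ℝ)+1) * Real.sqrt x))^2
                = 4 * ((Real.sqrt ((m:ℝ)+1))^2 * (Real.sqrt x)^2) := by ring
            have expand2 : (Real.sqrt Real.pi * ((m:ℝ)+1))^2
                = (Real.sqrt Real.pi)^2 * ((m:ℝ)+1)^2 := by ring
            rw [expand, expand2, e1, e2, e3, hxdef]
            nlinarith [sq_nonneg ((m:ℝ) - 1)]
          calc 2 * (Real.sqrt ((m:ℝ)+1) * Real.sqrt x)
              = Real.sqrt ((2 * (Real.sqrt ((m:ℝ)+1) * Real.sqrt x))^2) := (Real.sqrt_sq hA).symm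
            _ ≤ Real.sqrt ((Real.sqrt Real.pi * ((m:ℝ)+1))^2) := Real.sqrt_le_sqrt hsq
            _ = Real.sqrt Real.pi * ((m:ℝ)+1) := Real.sqrt_sq hB
      _ = Real.sqrt Real.pi ^ (m+1) * ((m:ℝ)+1) * Real.Gamma x := by
          rw [pow_succ]; ring


lemma vol_ball_diff {m : ℕ} (k : Fin (m+1)) (p : E (m+1)) (δ : ℝ) :
    volume (closedBall p 1 \ closedBall (p + δ • EuclideanSpace.single k 1) 1)
      ≤ ENNReal.ofReal |δ| * volume (closedBall (0 : E m) 1) := by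
  classical
  set p' : E (m+1) := p + δ • EuclideanSpace.single k 1 with hp'
  set T : Set (ℝ × (Fin m → ℝ)) :=
    {q | ((q.1 - p k)^2 + ∑ j, (q.2 j - p (k.succAbove j))^2 ≤ 1)
      ∧ ¬((q.1 - p k - δ)^2 + ∑ j, (q.2 j - p (k.succAbove j))^2 ≤ 1)} with hT
  have hcont1 : Continuous (fun q : ℝ × (Fin m → ℝ) =>
      (q.1 - p k)^2 + ∑ j, (q.2 j - p (k.succAbove j))^2) := by
    apply Continuous.add
    · exact (continuous_fst.sub continuous_const).pow 2
    · apply continuous_finset_sum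
      intro j _
      exact (((continuous_apply j).comp continuous_snd).sub continuous_const).pow 2
  have hcont2 : Continuous (fun q : ℝ × (Fin m → ℝ) =>
      (q.1 - p k - δ)^2 + ∑ j, (q.2 j - p (k.succAbove j))^2) := by
    apply Continuous.add
    · exact ((continuous_fst.sub continuous_const).sub continuous_const).pow 2
    · apply continuous_finset_sum
      intro j _
      exact (((continuous_apply j).comp continuous_snd).sub continuous_const).pow 2
  have hTmeas : MeasurableSet T := by
    exact (measurableSet_le hcont1.measurable measurable_const).inter
      (measurableSet_le hcont2.measurable measurable_const).compl
  have hF : MeasurePreserving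
      (⇑((MeasurableEquiv.toLp 2 (Fin (m+1) → ℝ)).symm.trans
        (MeasurableEquiv.piFinSuccAbove (fun _ => ℝ) k))) volume volume :=
    (volume_preserving_piFinSuccAbove (fun _ => ℝ) k).comp
      (EuclideanSpace.volume_preserving_symm_measurableEquiv_toLp (Fin (m+1)))
  set F := (MeasurableEquiv.toLp 2 (Fin (m+1) → ℝ)).symm.trans
    (MeasurableEquiv.piFinSuccAbove (fun _ => ℝ) k) with hFdef
  have hmem : ∀ (c s : E (m+1)), s ∈ closedBall c 1 ↔
      (s k - c k)^2 + ∑ j, (s (k.succAbove j) - c (k.succAbove j))^2 ≤ 1 := by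
    intro c s
    rw [mem_closedBall, EuclideanSpace.dist_eq, ← Real.sqrt_one,
      Real.sqrt_le_sqrt_iff (by positivity), Real.sqrt_one]
    rw [Fin.sum_univ_succAbove (fun i => dist (s i) (c i) ^ 2) k]
    simp only [Real.dist_eq, sq_abs]
  have h1 : p' k = p k + δ := by
    simp [hp', EuclideanSpace.single_apply]
  have h2 : ∀ j : Fin m, p' (k.succAbove j) = p (k.succAbove j) := by
    intro j
    simp [hp', EuclideanSpace.single_apply, Fin.succAbove_ne k j]
  have hpre : ⇑F ⁻¹' T = closedBall p 1 \ closedBall p' 1 := by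
    ext s
    have hFs : F s = (s k, fun j => s (k.succAbove j)) := rfl
    simp only [Set.mem_preimage, hFs, hT, Set.mem_setOf_eq, Set.mem_diff, hmem p s, hmem p' s]
    rw [h1]
    simp only [h2]
    rw [show s k - (p k + δ) = s k - p k - δ by ring]
  rw [← hpre, hF.measure_preimage hTmeas.nullMeasurableSet]
  rw [show (volume : Measure (ℝ × (Fin m → ℝ))) = (volume : Measure ℝ).prod volume from rfl,
    Measure.prod_apply_symm hTmeas]
  set W : Set (Fin m → ℝ) := {w | ∑ j, (w j - p (k.succAbove j))^2 ≤ 1} with hW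
  have hWmeas : MeasurableSet W := by
    apply measurableSet_le ?_ measurable_const
    apply Continuous.measurable
    apply continuous_finset_sum
    intro j _
    exact ((continuous_apply j).sub continuous_const).pow 2
  have hslice : ∀ w : Fin m → ℝ,
      volume ((fun t => (t, w)) ⁻¹' T) ≤
        ENNReal.ofReal |δ| * W.indicator (1 : (Fin m → ℝ) → ℝ≥0∞) w := by
    intro w
    set R : ℝ := ∑ j, (w j - p (k.succAbove j))^2 with hRdef
    have hR0 : 0 ≤ R := by positivity
    by_cases hw : R ≤ 1
    · have hind : W.indicator (1 : (Fin m → ℝ) → ℝ≥0∞) w = 1 := Set.indicator_of_mem (show w ∈ W from hw) _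
      rw [hind, mul_one]
      have hc0 : (0:ℝ) ≤ 1 - R := by linarith
      have habs : ∀ t : ℝ, ((t - p k)^2 + R ≤ 1) ↔
          (p k - Real.sqrt (1-R) ≤ t ∧ t ≤ p k + Real.sqrt (1-R)) := by
        intro t
        have e1 : ((t - p k)^2 + R ≤ 1) ↔ (t - p k)^2 ≤ 1 - R := by
          constructor <;> intro h <;> linarith
        rw [e1, ← Real.sqrt_le_sqrt_iff hc0, Real.sqrt_sq_eq_abs, abs_le]
        constructor <;> rintro ⟨u, v⟩ <;> exact ⟨by linarith, by linarith⟩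
      have habs' : ∀ t : ℝ, ((t - p k - δ)^2 + R ≤ 1) ↔
          (p k + δ - Real.sqrt (1-R) ≤ t ∧ t ≤ p k + δ + Real.sqrt (1-R)) := by
        intro t
        have := habs (t - δ)
        rw [show (t - δ - p k) = (t - p k - δ) by ring] at this
        rw [this]
        constructor <;> rintro ⟨u, v⟩ <;> exact ⟨by linarith, by linarith⟩
      rcases le_or_gt 0 δ with hδ | hδ
      · have hsub : (fun t => (t, w)) ⁻¹' T ⊆
            Set.Ico (p k - Real.sqrt (1-R)) (p k + δ - Real.sqrt (1-R)) := by
          rintro t ⟨hA, hB⟩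
          rw [habs] at hA
          refine ⟨hA.1, ?_⟩
          by_contra hcon
          push_neg at hcon
          exact hB ((habs' t).2 ⟨hcon, by linarith [hA.2]⟩)
        refine (measure_mono hsub).trans ?_
        rw [Real.volume_Ico]
        apply le_of_eq
        rw [show (p k + δ - Real.sqrt (1-R)) - (p k - Real.sqrt (1-R)) = δ by ring,
          abs_of_nonneg hδ]
      · have hsub : (fun t => (t, w)) ⁻¹' T ⊆
            Set.Ioc (p k + δ + Real.sqrt (1-R)) (p k + Real.sqrt (1-R)) := by
          rintro t ⟨hA, hB⟩
          rw [habs] at hA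
          refine ⟨?_, hA.2⟩
          by_contra hcon
          push_neg at hcon
          exact hB ((habs' t).2 ⟨by linarith [hA.1], hcon⟩)
        refine (measure_mono hsub).trans ?_
        rw [Real.volume_Ioc]
        apply le_of_eq
        rw [show (p k + Real.sqrt (1-R)) - (p k + δ + Real.sqrt (1-R)) = -δ by ring,
          abs_of_neg hδ]
    · have hempty : (fun t => (t, w)) ⁻¹' T = ∅ := by
        ext t
        simp only [Set.mem_preimage, hT, Set.mem_setOf_eq, Set.mem_empty_iff_false, iff_false]
        rintro ⟨hA, -⟩
        exact hw (by nlinarith [sq_nonneg (t - p k)])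
      rw [hempty]
      simp
  calc ∫⁻ w, volume ((fun t => (t, w)) ⁻¹' T) ∂volume
      ≤ ∫⁻ w, ENNReal.ofReal |δ| * W.indicator (1 : (Fin m → ℝ) → ℝ≥0∞) w ∂volume :=
        lintegral_mono hslice
    _ = ENNReal.ofReal |δ| * ∫⁻ w, W.indicator (1 : (Fin m → ℝ) → ℝ≥0∞) w ∂volume :=
        lintegral_const_mul _ (measurable_one.indicator hWmeas)
    _ = ENNReal.ofReal |δ| * volume W := by rw [lintegral_indicator_one hWmeas]
    _ ≤ ENNReal.ofReal |δ| * volume (closedBall (0 : E m) 1) := by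
        apply mul_le_mul_right
        have hWball : W = ⇑(MeasurableEquiv.toLp 2 (Fin m → ℝ)).symm.symm ⁻¹'
            (closedBall ((MeasurableEquiv.toLp 2 (Fin m → ℝ)).symm.symm
              (fun j => p (k.succAbove j))) 1) := by
          ext w
          simp only [Set.mem_preimage, mem_closedBall, hW, Set.mem_setOf_eq]
          rw [EuclideanSpace.dist_eq, ← Real.sqrt_one,
            Real.sqrt_le_sqrt_iff (by positivity), Real.sqrt_one]
          have he : ∀ j, dist ((MeasurableEquiv.toLp 2 (Fin m → ℝ)).symm.symm w j)
              ((MeasurableEquiv.toLp 2 (Fin m → ℝ)).symm.symm (fun i => p (k.succAbove i)) j)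
              = |w j - p (k.succAbove j)| := fun j => rfl
          simp only [he, sq_abs]
        rw [hWball, ((EuclideanSpace.volume_preserving_symm_measurableEquiv_toLp (Fin m)).symm _).measure_preimage
          measurableSet_closedBall.nullMeasurableSet]
        rw [Measure.addHaar_closedBall_center]


end Aux

section Aux2

lemma volB_ne_zero (n : ℕ) : volume (closedBall (0 : E n) 1) ≠ 0 :=
  (measure_closedBall_pos volume 0 one_pos).ne'

lemma volB_ne_top (n : ℕ) : volume (closedBall (0 : E n) 1) ≠ ⊤ :=
  measure_closedBall_lt_top.ne

instance uniformBall_prob (n : ℕ) : IsProbabilityMeasure (uniformBall n) := by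
  constructor
  rw [uniformBall, Measure.smul_apply, Measure.restrict_apply MeasurableSet.univ,
    Set.univ_inter, smul_eq_mul]
  exact ENNReal.inv_mul_cancel (volB_ne_zero n) (volB_ne_top n)

lemma uniformBall_ae {n : ℕ} {p : E n → Prop}
    (h : ∀ᵐ u ∂(volume : Measure (E n)), p u) : ∀ᵐ u ∂(uniformBall n), p u := by
  rw [uniformBall]
  exact Measure.ae_smul_measure (ae_restrict_of_ae h) _

lemma uniformBall_ae_mem (n : ℕ) : ∀ᵐ u ∂(uniformBall n), u ∈ closedBall (0 : E n) 1 := by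
  rw [uniformBall]
  exact Measure.ae_smul_measure (ae_restrict_mem measurableSet_closedBall) _

variable {dx dy : ℕ} {y : E dx → E dy} {L : ℝ≥0} {μ : ℝ}

lemma integrable_uB {f : E dx → E dy} (hf : AEStronglyMeasurable f (uniformBall dx))
    (C : ℝ) (hb : ∀ᵐ u ∂(uniformBall dx), ‖f u‖ ≤ C) : Integrable f (uniformBall dx) :=
  Integrable.mono' (integrable_const C) hf hb

lemma integrable_y_shift (hL : LipschitzWith L y) (x' : E dx) :
    Integrable (fun u => y (x' + μ • u)) (uniformBall dx) := by
  apply integrable_uB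
  · exact (hL.continuous.comp (continuous_const.add (continuous_id.const_smul μ))).aestronglyMeasurable
  · filter_upwards [uniformBall_ae_mem dx] with u hu
    calc ‖y (x' + μ • u)‖ = ‖(y (x' + μ • u) - y x') + y x'‖ := by rw [sub_add_cancel]
      _ ≤ ‖y (x' + μ • u) - y x'‖ + ‖y x'‖ := norm_add_le _ _
      _ ≤ L * ‖(x' + μ • u) - x'‖ + ‖y x'‖ := by
          gcongr
          exact hL.norm_sub_le _ _
      _ ≤ L * (|μ| * 1) + ‖y x'‖ := by
          gcongr
          · rw [add_sub_cancel_left, norm_smul, Real.norm_eq_abs]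
            exact mul_le_mul_of_nonneg_left (mem_closedBall_zero_iff.1 hu) (abs_nonneg μ)
      _ = L * |μ| + ‖y x'‖ := by ring

lemma measurable_affine (x : E dx) (μ : ℝ) : Measurable (fun u : E dx => x + μ • u) :=
  measurable_const.add (measurable_id.const_smul μ)

lemma integrable_fderiv_shift (hL : LipschitzWith L y) (x : E dx) :
    Integrable (fun u => fderiv ℝ y (x + μ • u)) (uniformBall dx) := by
  apply Integrable.mono' (integrable_const (L : ℝ))
  · exact ((measurable_fderiv ℝ y).comp (measurable_affine x μ)).aestronglyMeasurable
  · exact ae_of_all _ fun u => norm_fderiv_le_of_lipschitz ℝ hL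

lemma ae_diff_shift (hL : LipschitzWith L y) (hμ : 0 < μ) (x : E dx) :
    ∀ᵐ u ∂(uniformBall dx), DifferentiableAt ℝ y (x + μ • u) := by
  apply uniformBall_ae
  have hvol : ∀ᵐ w ∂(volume : Measure (E dx)), DifferentiableAt ℝ y w :=
    hL.ae_differentiableAt
  rw [ae_iff] at hvol ⊢
  set S : Set (E dx) := {w | ¬ DifferentiableAt ℝ y w} with hS
  have hkey : (fun u : E dx => x + μ • u) ⁻¹' S = (fun u : E dx => μ • u) ⁻¹' ((fun v => x + v) ⁻¹' S) := by
    ext u; simp [Set.mem_preimage]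
  have h1 : volume ((fun v : E dx => x + v) ⁻¹' S) = 0 := by
    rw [measure_preimage_add]
    exact hvol
  have h2 : volume ((fun u : E dx => x + μ • u) ⁻¹' S) = 0 := by
    rw [hkey, Measure.addHaar_preimage_smul volume hμ.ne' _, h1, mul_zero]
  exact h2

lemma hasFDerivAt_ymu (hL : LipschitzWith L y) (hμ : 0 < μ) (x : E dx) :
    HasFDerivAt (ymu y μ) (∫ u, fderiv ℝ y (x + μ • u) ∂(uniformBall dx)) x := by
  set ν := uniformBall dx with hν
  set A : E dx →L[ℝ] E dy := ∫ u, fderiv ℝ y (x + μ • u) ∂ν with hA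
  rw [hasFDerivAt_iff_tendsto, tendsto_iff_seq_tendsto]
  intro v hv
  show Tendsto (fun n => ‖v n - x‖⁻¹ * ‖ymu y μ (v n) - ymu y μ x - A (v n - x)‖) atTop (𝓝 0)
  have hintD := integrable_fderiv_shift (μ := μ) hL x
  have hintDv : ∀ (h : E dx), Integrable (fun u => fderiv ℝ y (x + μ • u) h) ν := by
    intro h
    apply Integrable.mono' (integrable_const ((L : ℝ) * ‖h‖))
    · exact ((measurable_fderiv_apply_const ℝ y h).comp (measurable_affine x μ)).aestronglyMeasurable
    · refine ae_of_all _ fun u => ?_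
      calc ‖fderiv ℝ y (x + μ • u) h‖ ≤ ‖fderiv ℝ y (x + μ • u)‖ * ‖h‖ :=
            ContinuousLinearMap.le_opNorm _ _
        _ ≤ (L : ℝ) * ‖h‖ := by
            gcongr
            exact norm_fderiv_le_of_lipschitz ℝ hL
  set Fn : ℕ → E dx → ℝ := fun n u =>
    ‖v n - x‖⁻¹ * ‖y (v n + μ • u) - y (x + μ • u) - fderiv ℝ y (x + μ • u) (v n - x)‖ with hFn
  have key : Tendsto (fun n => ∫ u, Fn n u ∂ν) atTop (𝓝 0) := by
    have h0 : (0:ℝ) = ∫ (_ : E dx), (0:ℝ) ∂ν := by simp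
    rw [h0]
    apply tendsto_integral_of_dominated_convergence (fun _ => 2 * (L:ℝ))
    · intro n
      apply AEStronglyMeasurable.mul aestronglyMeasurable_const
      apply AEStronglyMeasurable.norm
      apply AEStronglyMeasurable.sub
      · apply AEStronglyMeasurable.sub
        · exact (hL.continuous.comp (continuous_const.add (continuous_id.const_smul μ))).aestronglyMeasurable
        · exact (hL.continuous.comp (continuous_const.add (continuous_id.const_smul μ))).aestronglyMeasurable
      · exact ((measurable_fderiv_apply_const ℝ y (v n - x)).comp
          (measurable_affine x μ)).aestronglyMeasurable
    · exact integrable_const _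
    · intro n
      refine ae_of_all _ fun u => ?_
      rw [hFn]
      simp only [Real.norm_eq_abs]
      by_cases hvx : v n = x
      · simp [hvx]
      · have hpos : 0 < ‖v n - x‖ := by
          rw [norm_pos_iff, sub_ne_zero]; exact hvx
        rw [abs_of_nonneg (by positivity)]
        calc ‖v n - x‖⁻¹ * ‖y (v n + μ • u) - y (x + μ • u) - fderiv ℝ y (x + μ • u) (v n - x)‖
            ≤ ‖v n - x‖⁻¹ * (‖y (v n + μ • u) - y (x + μ • u)‖ + ‖fderiv ℝ y (x + μ • u) (v n - x)‖) := by
              gcongr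
              exact norm_sub_le _ _
          _ ≤ ‖v n - x‖⁻¹ * ((L : ℝ) * ‖v n - x‖ + (L : ℝ) * ‖v n - x‖) := by
              gcongr
              · calc ‖y (v n + μ • u) - y (x + μ • u)‖ ≤ L * ‖(v n + μ • u) - (x + μ • u)‖ :=
                    hL.norm_sub_le _ _
                  _ = L * ‖v n - x‖ := by rw [add_sub_add_right_eq_sub]
              · calc ‖fderiv ℝ y (x + μ • u) (v n - x)‖
                    ≤ ‖fderiv ℝ y (x + μ • u)‖ * ‖v n - x‖ := ContinuousLinearMap.le_opNorm _ _
                  _ ≤ (L:ℝ) * ‖v n - x‖ := by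
                      gcongr; exact norm_fderiv_le_of_lipschitz ℝ hL
          _ = 2 * (L:ℝ) := by field_simp; ring
    · filter_upwards [ae_diff_shift hL hμ x] with u hu
      have hder := hasFDerivAt_iff_tendsto.1 hu.hasFDerivAt
      have hseq : Tendsto (fun n => v n + μ • u) atTop (𝓝 (x + μ • u)) :=
        hv.add_const (μ • u)
      have := hder.comp hseq
      have heq : (fun n => Fn n u) = (fun x' => ‖x' - (x + μ • u)‖⁻¹ *
          ‖y x' - y (x + μ • u) - fderiv ℝ y (x + μ • u) (x' - (x + μ • u))‖) ∘ (fun n => v n + μ • u) := by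
        funext n
        simp only [Function.comp_apply, hFn, add_sub_add_right_eq_sub]
      rw [heq]
      exact this
  refine squeeze_zero (fun n => by positivity) (fun n => ?_) key
  -- bound each term by the integral
  have hint1 := integrable_y_shift (μ := μ) hL (v n)
  have hint2 := integrable_y_shift (μ := μ) hL x
  have hint3 := hintDv (v n - x)
  have hint12 : Integrable (fun u => y (v n + μ • u) - y (x + μ • u)) ν := hint1.sub hint2
  have hrepr : ymu y μ (v n) - ymu y μ x - A (v n - x)
      = ∫ u, (y (v n + μ • u) - y (x + μ • u) - fderiv ℝ y (x + μ • u) (v n - x)) ∂ν := by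
    have h1 : ∫ u, (y (v n + μ • u) - y (x + μ • u) - fderiv ℝ y (x + μ • u) (v n - x)) ∂ν
        = (∫ u, (y (v n + μ • u) - y (x + μ • u)) ∂ν) - ∫ u, fderiv ℝ y (x + μ • u) (v n - x) ∂ν :=
      integral_sub hint12 hint3
    have h2 : ∫ u, (y (v n + μ • u) - y (x + μ • u)) ∂ν
        = (∫ u, y (v n + μ • u) ∂ν) - ∫ u, y (x + μ • u) ∂ν := integral_sub hint1 hint2
    rw [h1, h2, ymu, ymu, hA, ContinuousLinearMap.integral_apply hintD, hν]
  rw [hrepr]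
  calc ‖v n - x‖⁻¹ * ‖∫ u, (y (v n + μ • u) - y (x + μ • u) - fderiv ℝ y (x + μ • u) (v n - x)) ∂ν‖
      ≤ ‖v n - x‖⁻¹ * ∫ u, ‖y (v n + μ • u) - y (x + μ • u) - fderiv ℝ y (x + μ • u) (v n - x)‖ ∂ν := by
        gcongr
        exact norm_integral_le_integral_norm _
    _ = ∫ u, Fn n u ∂ν := by
        rw [integral_const_mul]


/-- The key per-coordinate step bound. -/
lemma step_bound {m : ℕ} (g : E (m+1) → ℝ) (hgm : Measurable g) {C : ℝ} (hC : 0 ≤ C)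
    (hgb : ∀ w, |g w| ≤ C) {μ : ℝ} (hμ : 0 < μ) (p : E (m+1)) (k : Fin (m+1)) (c : ℝ) :
    |(∫ u, g (p + c • EuclideanSpace.single k 1 + μ • u) ∂(uniformBall (m+1)))
      - ∫ u, g (p + μ • u) ∂(uniformBall (m+1))|
    ≤ (volume (closedBall (0 : E (m+1)) 1)).toReal⁻¹
        * (2 * C * (volume (closedBall (0 : E m) 1)).toReal / μ) * |c| := by
  set B : Set (E (m+1)) := closedBall 0 1 with hB
  set h : E (m+1) → ℝ := fun u => g (p + μ • u) with hh
  set a : E (m+1) := (c/μ) • EuclideanSpace.single k 1 with ha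
  have hmeas_h : Measurable h := hgm.comp (measurable_const.add (measurable_id.const_smul μ))
  have hbb : ∀ u, |h u| ≤ C := fun u => hgb _
  -- rewrite both integrals as set integrals over translated balls
  have e0 : ∀ q : E (m+1), (∫ u, g (q + μ • u) ∂(uniformBall (m+1)))
      = (volume B)⁻¹.toReal • ∫ u in B, g (q + μ • u) ∂volume := by
    intro q
    rw [uniformBall, integral_smul_measure]
  have hshift : ∀ u : E (m+1), p + c • EuclideanSpace.single k 1 + μ • u = p + μ • (u + a) := by
    intro u
    rw [ha, smul_add, smul_smul, mul_div_cancel₀ _ hμ.ne']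
    abel
  have e1 : ∫ u in B, g (p + c • EuclideanSpace.single k 1 + μ • u) ∂volume
      = ∫ v in closedBall a 1, h v ∂volume := by
    simp_rw [hshift]
    rw [← integral_indicator measurableSet_closedBall, ← integral_indicator measurableSet_closedBall]
    have key : ∀ u : E (m+1), B.indicator (fun v => h (v + a)) u
        = (closedBall a 1).indicator h (u + a) := by
      intro u
      have hmem : u ∈ B ↔ u + a ∈ closedBall a 1 := by
        rw [hB, mem_closedBall, mem_closedBall, dist_eq_norm, dist_eq_norm,
          add_sub_cancel_right, sub_zero]
      by_cases hu : u ∈ B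
      · rw [Set.indicator_of_mem hu, Set.indicator_of_mem (hmem.1 hu)]
      · rw [Set.indicator_of_notMem hu, Set.indicator_of_notMem (fun hc' => hu (hmem.2 hc'))]
    calc ∫ u, B.indicator (fun v => h (v + a)) u ∂volume
        = ∫ u, (closedBall a 1).indicator h (u + a) ∂volume := by simp_rw [key]
      _ = ∫ u, (closedBall a 1).indicator h u ∂volume :=
          integral_add_right_eq_self _ a
  -- split into set differences
  have hfin : ∀ s : Set (E (m+1)), s ⊆ closedBall a 1 ∪ B → volume s < ⊤ := by
    intro s hs
    refine (measure_mono hs).trans_lt ?_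
    exact (measure_union_le _ _).trans_lt
      (ENNReal.add_lt_top.2 ⟨measure_closedBall_lt_top, measure_closedBall_lt_top⟩)
  have hio : ∀ s : Set (E (m+1)), MeasurableSet s → s ⊆ closedBall a 1 ∪ B → IntegrableOn h s volume := by
    intro s hsm hs
    apply Integrable.mono' (g := fun _ => C) _ (hmeas_h.aestronglyMeasurable.restrict)
    · exact ae_of_all _ fun u => by rw [Real.norm_eq_abs]; exact hbb u
    · rw [integrable_const_iff]
      refine Or.inr ?_
      constructor
      rw [Measure.restrict_apply_univ]
      exact hfin s hs
  have hsplit : (∫ v in closedBall a 1, h v ∂volume) - ∫ v in B, h v ∂volume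
      = (∫ v in closedBall a 1 \ B, h v ∂volume) - ∫ v in B \ closedBall a 1, h v ∂volume := by
    have h1 : (∫ v in closedBall a 1 ∩ B, h v ∂volume) + ∫ v in closedBall a 1 \ B, h v ∂volume
        = ∫ v in closedBall a 1, h v ∂volume :=
      integral_inter_add_diff measurableSet_closedBall
        (hio _ measurableSet_closedBall Set.subset_union_left)
    have h2 : (∫ v in B ∩ closedBall a 1, h v ∂volume) + ∫ v in B \ closedBall a 1, h v ∂volume
        = ∫ v in B, h v ∂volume :=
      integral_inter_add_diff measurableSet_closedBall
        (hio _ measurableSet_closedBall Set.subset_union_right)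
    rw [← h1, ← h2, Set.inter_comm]
    ring
  -- volume bounds on the set differences
  have hv1 : (volume (closedBall a 1 \ B)).toReal
      ≤ |c/μ| * (volume (closedBall (0 : E m) 1)).toReal := by
    have := vol_ball_diff k a (-(c/μ))
    have hzero : a + (-(c/μ)) • EuclideanSpace.single k 1 = 0 := by
      rw [ha, ← add_smul]
      simp
    rw [hzero] at this
    calc (volume (closedBall a 1 \ B)).toReal
        ≤ (ENNReal.ofReal |(-(c/μ))| * volume (closedBall (0 : E m) 1)).toReal := by
          apply ENNReal.toReal_mono _ this
          exact ENNReal.mul_ne_top ENNReal.ofReal_ne_top (volB_ne_top m)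
      _ = |c/μ| * (volume (closedBall (0 : E m) 1)).toReal := by
          rw [ENNReal.toReal_mul, ENNReal.toReal_ofReal (abs_nonneg _), abs_neg]
  have hv2 : (volume (B \ closedBall a 1)).toReal
      ≤ |c/μ| * (volume (closedBall (0 : E m) 1)).toReal := by
    have := vol_ball_diff k 0 (c/μ)
    have hzero : (0 : E (m+1)) + (c/μ) • EuclideanSpace.single k 1 = a := by
      rw [ha, zero_add]
    rw [hzero] at this
    calc (volume (B \ closedBall a 1)).toReal
        ≤ (ENNReal.ofReal |c/μ| * volume (closedBall (0 : E m) 1)).toReal := by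
          apply ENNReal.toReal_mono _ this
          exact ENNReal.mul_ne_top ENNReal.ofReal_ne_top (volB_ne_top m)
      _ = |c/μ| * (volume (closedBall (0 : E m) 1)).toReal := by
          rw [ENNReal.toReal_mul, ENNReal.toReal_ofReal (abs_nonneg _)]
  -- put it together
  rw [e0, e0, e1, ← smul_sub, hsplit]
  rw [smul_eq_mul, abs_mul]
  have hVB : (0:ℝ) ≤ ((volume B)⁻¹).toReal := ENNReal.toReal_nonneg
  have habs : |((volume B)⁻¹).toReal| = (volume B)⁻¹.toReal := abs_of_nonneg hVB
  rw [habs]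
  have hbd : |(∫ v in closedBall a 1 \ B, h v ∂volume) - ∫ v in B \ closedBall a 1, h v ∂volume|
      ≤ 2 * C * (volume (closedBall (0 : E m) 1)).toReal / μ * |c| := by
    have b1 : |∫ v in closedBall a 1 \ B, h v ∂volume|
        ≤ C * (volume (closedBall a 1 \ B)).toReal := by
      have := norm_setIntegral_le_of_norm_le_const (μ := volume) (C := C) (s := closedBall a 1 \ B)
        (hfin _ (Set.diff_subset.trans Set.subset_union_left))
        (fun x _ => by rw [Real.norm_eq_abs]; exact hbb x)
      rwa [Real.norm_eq_abs] at this
    have b2 : |∫ v in B \ closedBall a 1, h v ∂volume|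
        ≤ C * (volume (B \ closedBall a 1)).toReal := by
      have := norm_setIntegral_le_of_norm_le_const (μ := volume) (C := C) (s := B \ closedBall a 1)
        (hfin _ (Set.diff_subset.trans Set.subset_union_right))
        (fun x _ => by rw [Real.norm_eq_abs]; exact hbb x)
      rwa [Real.norm_eq_abs] at this
    calc |(∫ v in closedBall a 1 \ B, h v ∂volume) - ∫ v in B \ closedBall a 1, h v ∂volume|
        ≤ |∫ v in closedBall a 1 \ B, h v ∂volume| + |∫ v in B \ closedBall a 1, h v ∂volume| :=
          abs_sub _ _
      _ ≤ C * (volume (closedBall a 1 \ B)).toReal + C * (volume (B \ closedBall a 1)).toReal := by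
          gcongr
      _ ≤ C * (|c/μ| * (volume (closedBall (0 : E m) 1)).toReal)
            + C * (|c/μ| * (volume (closedBall (0 : E m) 1)).toReal) := by
          gcongr
      _ = 2 * C * (volume (closedBall (0 : E m) 1)).toReal / μ * |c| := by
          rw [abs_div, abs_of_pos hμ]
          field_simp
          ring
  calc ((volume B)⁻¹).toReal * |(∫ v in closedBall a 1 \ B, h v ∂volume)
          - ∫ v in B \ closedBall a 1, h v ∂volume|
      ≤ ((volume B)⁻¹).toReal * (2 * C * (volume (closedBall (0 : E m) 1)).toReal / μ * |c|) := by
        exact mul_le_mul_of_nonneg_left hbd hVB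
    _ = (volume (closedBall (0 : E (m+1)) 1)).toReal⁻¹
        * (2 * C * (volume (closedBall (0 : E m) 1)).toReal / μ) * |c| := by
        rw [ENNReal.toReal_inv, hB]
        ring


section Coord
variable {dx dy : ℕ} {y : E dx → E dy} {L : ℝ≥0} {μ : ℝ}

lemma coord_abs_le_norm {n : ℕ} (q : E n) (i : Fin n) : |q i| ≤ ‖q‖ := by
  rw [EuclideanSpace.norm_eq]
  have h1 : |q i| = Real.sqrt (‖q i‖^2) := by
    rw [Real.sqrt_sq_eq_abs, Real.norm_eq_abs, abs_abs]
  rw [h1]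
  apply Real.sqrt_le_sqrt
  exact Finset.single_le_sum (fun l _ => sq_nonneg ‖q l‖) (Finset.mem_univ i)

lemma g_abs_le (hL : LipschitzWith L y) (w : E dx) (j : Fin dx) (i : Fin dy) :
    |fderiv ℝ y w (EuclideanSpace.single j 1) i| ≤ (L : ℝ) := by
  calc |fderiv ℝ y w (EuclideanSpace.single j 1) i|
      ≤ ‖fderiv ℝ y w (EuclideanSpace.single j 1)‖ :=
        coord_abs_le_norm _ i
    _ ≤ ‖fderiv ℝ y w‖ * ‖EuclideanSpace.single j (1:ℝ)‖ := ContinuousLinearMap.le_opNorm _ _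
    _ = ‖fderiv ℝ y w‖ := by rw [EuclideanSpace.norm_single, norm_one, mul_one]
    _ ≤ (L : ℝ) := norm_fderiv_le_of_lipschitz ℝ hL

lemma g_measurable (y : E dx → E dy) (j : Fin dx) (i : Fin dy) :
    Measurable (fun w => fderiv ℝ y w (EuclideanSpace.single j 1) i) := by
  exact ((EuclideanSpace.proj (𝕜 := ℝ) i).continuous.measurable).comp
    (measurable_fderiv_apply_const ℝ y _)

lemma fderiv_ymu_coord (hL : LipschitzWith L y) (hμ : 0 < μ) (x : E dx) (j : Fin dx) (i : Fin dy) :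
    fderiv ℝ (ymu y μ) x (EuclideanSpace.single j 1) i
      = ∫ u, fderiv ℝ y (x + μ • u) (EuclideanSpace.single j 1) i ∂(uniformBall dx) := by
  rw [(hasFDerivAt_ymu hL hμ x).fderiv,
    ContinuousLinearMap.integral_apply (integrable_fderiv_shift hL x)]
  have hint : Integrable (fun u => fderiv ℝ y (x + μ • u) (EuclideanSpace.single j 1))
      (uniformBall dx) := by
    apply Integrable.mono' (integrable_const (L : ℝ))
    · exact ((measurable_fderiv_apply_const ℝ y _).comp (measurable_affine x μ)).aestronglyMeasurable
    · refine ae_of_all _ fun u => ?_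
      calc ‖fderiv ℝ y (x + μ • u) (EuclideanSpace.single j 1)‖
          ≤ ‖fderiv ℝ y (x + μ • u)‖ * ‖EuclideanSpace.single j (1:ℝ)‖ :=
            ContinuousLinearMap.le_opNorm _ _
        _ = ‖fderiv ℝ y (x + μ • u)‖ := by rw [EuclideanSpace.norm_single, norm_one, mul_one]
        _ ≤ (L : ℝ) := norm_fderiv_le_of_lipschitz ℝ hL
  exact ((EuclideanSpace.proj (𝕜 := ℝ) i).integral_comp_comm hint).symm

end Coord

/-- every partial derivative `∂(y_μ)_i/∂x_j` is `(d_x L_y / μ)`-Lipschitz. -/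
theorem stmt5 (dx dy : ℕ) (ystar : E dx → E dy) (Ly : ℝ≥0)
    (hLip : LipschitzWith Ly ystar) (μ : ℝ) (hμ : 0 < μ) :
    ∀ (i : Fin dy) (j : Fin dx) (x z : E dx),
      |fderiv ℝ (ymu ystar μ) x (EuclideanSpace.single j (1 : ℝ)) i
        - fderiv ℝ (ymu ystar μ) z (EuclideanSpace.single j (1 : ℝ)) i|
      ≤ (dx : ℝ) * (Ly : ℝ) / μ * ‖x - z‖ := by
  intro i j x z
  match dx, ystar, hLip, j, x, z with
  | 0, ystar, hLip, j, x, z =>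
      have hxz : x = z := Subsingleton.elim x z
      rw [hxz, sub_self, abs_zero]
      positivity
  | (m+1), ystar, hLip, j, x, z =>
    classical
    set g : E (m+1) → ℝ := fun w => fderiv ℝ ystar w (EuclideanSpace.single j 1) i with hg
    set Φ : E (m+1) → ℝ := fun p => ∫ u, g (p + μ • u) ∂(uniformBall (m+1)) with hΦ
    have hcoord : ∀ p : E (m+1),
        fderiv ℝ (ymu ystar μ) p (EuclideanSpace.single j (1:ℝ)) i = Φ p :=
      fun p => fderiv_ymu_coord hLip hμ p j i
    rw [hcoord x, hcoord z]
    set δ : Fin (m+1) → ℝ := fun k => x k - z k with hδ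
    set VB := (volume (closedBall (0 : E (m+1)) 1)).toReal with hVB
    set Vm := (volume (closedBall (0 : E m) 1)).toReal with hVm
    set K : ℝ := VB⁻¹ * (2 * (Ly:ℝ) * Vm / μ) with hK
    have hVBpos : 0 < VB := by
      rw [hVB]
      exact ENNReal.toReal_pos (volB_ne_zero (m+1)) (volB_ne_top (m+1))
    have hK0 : 0 ≤ K := by
      rw [hK, hVB, hVm]
      positivity
    have hstep : ∀ (p : E (m+1)) (k : Fin (m+1)) (c : ℝ),
        |Φ (p + c • EuclideanSpace.single k 1) - Φ p| ≤ K * |c| := by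
      intro p k c
      have hsb := step_bound g (by rw [hg]; exact g_measurable ystar j i)
        (by positivity : (0:ℝ) ≤ (Ly:ℝ)) (fun w => g_abs_le hLip w j i) hμ p k c
      rw [hΦ]
      simp only
      calc |(∫ u, g (p + c • EuclideanSpace.single k 1 + μ • u) ∂(uniformBall (m+1)))
            - ∫ u, g (p + μ • u) ∂(uniformBall (m+1))|
          ≤ (volume (closedBall (0 : E (m+1)) 1)).toReal⁻¹
              * (2 * (Ly:ℝ) * (volume (closedBall (0 : E m) 1)).toReal / μ) * |c| := hsb
        _ = K * |c| := by rw [hK, hVB, hVm]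
    set q : ℕ → E (m+1) := fun nn =>
      z + ∑ k ∈ Finset.univ.filter (fun k : Fin (m+1) => (k:ℕ) < nn),
        δ k • EuclideanSpace.single k 1 with hq
    have hq0 : q 0 = z := by
      rw [hq]
      simp
    have hfilter : ∀ (nn : ℕ) (hnn : nn < m+1),
        Finset.univ.filter (fun k : Fin (m+1) => (k:ℕ) < nn + 1)
          = insert (⟨nn, hnn⟩ : Fin (m+1))
              (Finset.univ.filter (fun k : Fin (m+1) => (k:ℕ) < nn)) := by
      intro nn hnn
      ext k
      have hk := k.isLt
      simp only [Finset.mem_filter, Finset.mem_univ, true_and, Finset.mem_insert, Fin.ext_iff]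
      omega
    have hqstep : ∀ nn : ℕ, (hnn : nn < m+1) →
        q (nn + 1) = q nn + δ ⟨nn, hnn⟩ • EuclideanSpace.single ⟨nn, hnn⟩ 1 := by
      intro nn hnn
      rw [hq]
      simp only
      rw [hfilter nn hnn, Finset.sum_insert (by simp)]
      abel
    have hqtop : q (m+1) = x := by
      rw [hq]
      simp only
      have hall : Finset.univ.filter (fun k : Fin (m+1) => (k:ℕ) < m+1) = Finset.univ := by
        ext k
        simp only [Finset.mem_filter, Finset.mem_univ, true_and, iff_true]; exact k.isLt
      rw [hall]
      have hsum : ∑ k : Fin (m+1), δ k • EuclideanSpace.single k (1:ℝ) = x - z := by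
        ext l
        have happ : (∑ k : Fin (m+1), δ k • EuclideanSpace.single k (1:ℝ)) l
            = ∑ k : Fin (m+1), (δ k • EuclideanSpace.single k (1:ℝ)) l :=
          by rw [WithLp.ofLp_sum, Finset.sum_apply]
        rw [happ]
        simp only [PiLp.smul_apply, EuclideanSpace.single_apply, smul_eq_mul]
        rw [Finset.sum_eq_single l]
        · simp [hδ]
        · intro b _ hb
          rw [if_neg (fun hc => hb hc.symm), mul_zero]
        · intro hb
          exact absurd (Finset.mem_univ l) hb
      rw [hsum]
      abel
    have htele : ∀ nn : ℕ, nn ≤ m+1 → |Φ (q nn) - Φ z|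
        ≤ K * ∑ k ∈ Finset.univ.filter (fun k : Fin (m+1) => (k:ℕ) < nn), |δ k| := by
      intro nn
      induction nn with
      | zero =>
          intro _
          rw [hq0, sub_self, abs_zero]
          simp
      | succ nn ih =>
          intro hnn
          have hnn' : nn < m+1 := by omega
          have h1 := ih (by omega)
          have h2 : |Φ (q (nn+1)) - Φ (q nn)| ≤ K * |δ ⟨nn, hnn'⟩| := by
            rw [hqstep nn hnn']
            exact hstep (q nn) ⟨nn, hnn'⟩ (δ ⟨nn, hnn'⟩)
          calc |Φ (q (nn+1)) - Φ z|
              ≤ |Φ (q (nn+1)) - Φ (q nn)| + |Φ (q nn) - Φ z| := abs_sub_le _ _ _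
            _ ≤ K * |δ ⟨nn, hnn'⟩|
                + K * ∑ k ∈ Finset.univ.filter (fun k : Fin (m+1) => (k:ℕ) < nn), |δ k| := by
                gcongr
            _ = K * ∑ k ∈ Finset.univ.filter (fun k : Fin (m+1) => (k:ℕ) < nn + 1), |δ k| := by
                rw [hfilter nn hnn', Finset.sum_insert (by simp)]
                ring
    have hmain := htele (m+1) le_rfl
    rw [hqtop] at hmain
    have hCS : ∑ k ∈ Finset.univ.filter (fun k : Fin (m+1) => (k:ℕ) < m+1), |δ k|
        ≤ Real.sqrt ((m:ℝ)+1) * ‖x - z‖ := by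
      have hall : Finset.univ.filter (fun k : Fin (m+1) => (k:ℕ) < m+1) = Finset.univ := by
        ext k; simp only [Finset.mem_filter, Finset.mem_univ, true_and, iff_true]; exact k.isLt
      rw [hall]
      have hnorm : ‖x - z‖ = Real.sqrt (∑ k : Fin (m+1), (δ k)^2) := by
        rw [EuclideanSpace.norm_eq]
        congr 1
        apply Finset.sum_congr rfl
        intro k _
        rw [Real.norm_eq_abs, sq_abs]
        rfl
      have hsq : (∑ k : Fin (m+1), |δ k|)^2 ≤ ((m:ℝ)+1) * ∑ k : Fin (m+1), (δ k)^2 := by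
        have hs := sq_sum_le_card_mul_sum_sq (s := (Finset.univ : Finset (Fin (m+1))))
          (f := fun k => |δ k|)
        have : ((Finset.univ : Finset (Fin (m+1))).card : ℝ) = (m:ℝ)+1 := by
          rw [Finset.card_univ, Fintype.card_fin]; push_cast; ring
        rw [this] at hs
        simpa [sq_abs] using hs
      have h0 : 0 ≤ ∑ k : Fin (m+1), |δ k| := Finset.sum_nonneg fun k _ => abs_nonneg _
      calc ∑ k : Fin (m+1), |δ k| = Real.sqrt ((∑ k : Fin (m+1), |δ k|)^2) :=
            (Real.sqrt_sq h0).symm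
        _ ≤ Real.sqrt (((m:ℝ)+1) * ∑ k : Fin (m+1), (δ k)^2) := Real.sqrt_le_sqrt hsq
        _ = Real.sqrt ((m:ℝ)+1) * Real.sqrt (∑ k : Fin (m+1), (δ k)^2) := by
            rw [Real.sqrt_mul (by positivity)]
        _ = Real.sqrt ((m:ℝ)+1) * ‖x - z‖ := by rw [hnorm]
    have hratio : K * Real.sqrt ((m:ℝ)+1) ≤ ((m:ℝ)+1) * (Ly : ℝ) / μ := by
      have hvr := vol_ratio m
      rw [← hVm, ← hVB] at hvr
      rw [hK]
      have step1 : VB⁻¹ * (2 * (Ly:ℝ) * Vm / μ) * Real.sqrt ((m:ℝ)+1)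
          = ((Ly:ℝ)/μ) * (VB⁻¹ * (2 * Vm * Real.sqrt ((m:ℝ)+1))) := by ring
      have step2 : ((m:ℝ)+1) * (Ly:ℝ) / μ = ((Ly:ℝ)/μ) * ((m:ℝ)+1) := by ring
      rw [step1, step2]
      apply mul_le_mul_of_nonneg_left _ (by positivity)
      calc VB⁻¹ * (2 * Vm * Real.sqrt ((m:ℝ)+1))
          ≤ VB⁻¹ * (((m:ℝ)+1) * VB) := by
            apply mul_le_mul_of_nonneg_left _ (by positivity)
            calc 2 * Vm * Real.sqrt ((m:ℝ)+1) = 2 * Vm * Real.sqrt ((m:ℕ)+1) := by norm_cast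
              _ ≤ ((m:ℝ)+1) * VB := hvr
        _ = ((m:ℝ)+1) := by field_simp
    calc |Φ x - Φ z|
        ≤ K * ∑ k ∈ Finset.univ.filter (fun k : Fin (m+1) => (k:ℕ) < m+1), |δ k| := hmain
      _ ≤ K * (Real.sqrt ((m:ℝ)+1) * ‖x - z‖) := mul_le_mul_of_nonneg_left hCS hK0
      _ = (K * Real.sqrt ((m:ℝ)+1)) * ‖x - z‖ := by ring
      _ ≤ (((m:ℝ)+1) * (Ly:ℝ) / μ) * ‖x - z‖ := mul_le_mul_of_nonneg_right hratio (norm_nonneg _)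
      _ = ((m+1:ℕ):ℝ) * (Ly:ℝ) / μ * ‖x - z‖ := by push_cast; ring


end Aux2
end
end

section
/- Let y* : ℝ^{d_x} → ℝ^{d_y} be L_y-Lipschitz, let μ > 0 and fix x ∈ ℝ^{d_x}. For v drawn uniformly from the unit sphere S^{d_x}, the finite-difference matrix H(v) = (d_x / 2μ)(y*(x + μ v) − y*(x − μ v)) vᵀ is an unbiased estimator of the Jacobian of the smoothed response: E_{v ~ U(S^{d_x})}[H(v)] = (d_x/μ) E_{v ~ U(S^{d_x})}[y*(x + μ v) vᵀ] = Jac y_μ(x). -/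
open MeasureTheory Metric
open scoped InnerProductSpace RealInnerProductSpace NNReal

noncomputable section

section Aux
open Set Pointwise
open scoped ENNReal
set_option linter.unusedSectionVars false
set_option linter.unusedVariables false
set_option maxHeartbeats 1000000
set_option synthInstance.maxHeartbeats 400000

variable {d : ℕ} {F : Type*} [NormedAddCommGroup F] [NormedSpace ℝ F] [CompleteSpace F]

lemma aux_nontrivial (hd : d ≠ 0) : Nontrivial (E d) := by
  have : 0 < Module.finrank ℝ (E d) := by
    rw [finrank_euclideanSpace_fin]; omega
  exact Module.nontrivial_of_finrank_pos this

lemma comap_integrable (hd : d ≠ 0) {f : E d → F} (hf : Integrable f volume) :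
    Integrable (fun x : ({0}ᶜ : Set (E d)) => f x) (Measure.comap Subtype.val volume) := by
  haveI := aux_nontrivial hd
  have hres : Integrable f (Measure.map Subtype.val
      (Measure.comap (Subtype.val : ({0}ᶜ : Set (E d)) → E d) volume)) := by
    rw [map_comap_subtype_coe (measurableSet_singleton (0:E d)).compl]
    exact hf.restrict
  exact (MeasurableEmbedding.integrable_map_iff
      (MeasurableEmbedding.subtype_coe (measurableSet_singleton (0:E d)).compl)).1 hres

lemma prod_integrable (hd : d ≠ 0) {f : E d → F} (hf : Integrable f volume) :
    Integrable (fun p : sphere (0:E d) 1 × Ioi (0:ℝ) => f (p.2.1 • (p.1 : E d)))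
      ((volume : Measure (E d)).toSphere.prod (Measure.volumeIoiPow (Module.finrank ℝ (E d) - 1))) := by
  haveI := aux_nontrivial hd
  rw [← MeasurePreserving.integrable_comp_emb
      ((volume : Measure (E d)).measurePreserving_homeomorphUnitSphereProd)
      (Homeomorph.measurableEmbedding _)]
  have : (fun p : sphere (0:E d) 1 × Ioi (0:ℝ) => f (p.2.1 • (p.1 : E d))) ∘
      (homeomorphUnitSphereProd (E d)) = fun x : ({0}ᶜ : Set (E d)) => f x := by
    funext x
    simp [homeomorphUnitSphereProd, smul_inv_smul₀ (norm_ne_zero_iff.2 x.2)]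
  rw [this]
  exact comap_integrable hd hf

lemma inner_radial_eq (hd : d ≠ 0) (f : E d → F) (v : E d) :
    ∫ r : Ioi (0:ℝ), f (r.1 • v) ∂(Measure.volumeIoiPow (Module.finrank ℝ (E d) - 1))
      = ∫ r in Ioi (0:ℝ), r ^ (d - 1) • f (r • v) := by
  simp only [Measure.volumeIoiPow, ENNReal.ofReal]
  rw [integral_withDensity_eq_integral_smul
      ((measurable_subtype_coe.pow_const _).real_toNNReal),
    integral_subtype_comap measurableSet_Ioi
      (fun a : ℝ => Real.toNNReal (a ^ (Module.finrank ℝ (E d) - 1)) • f (a • v)),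
    setIntegral_congr_fun measurableSet_Ioi (g := fun r : ℝ => r ^ (d-1) • f (r • v))]
  intro r hr
  dsimp only
  rw [NNReal.smul_def, Real.coe_toNNReal _ (pow_nonneg (le_of_lt hr) _),
    finrank_euclideanSpace_fin]

lemma polar_integral (hd : d ≠ 0) {f : E d → F} (hf : Integrable f volume) :
    ∫ u, f u = ∫ v : sphere (0:E d) 1,
      (∫ r in Ioi (0:ℝ), r ^ (d - 1) • f (r • (v : E d))) ∂((volume : Measure (E d)).toSphere) := by
  haveI := aux_nontrivial hd
  have h1 : ∫ u, f u = ∫ x : ({0}ᶜ : Set (E d)), f x ∂(Measure.comap Subtype.val volume) := by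
    rw [integral_subtype_comap (measurableSet_singleton (0:E d)).compl f,
      restrict_compl_singleton]
  have h2 : ∫ x : ({0}ᶜ : Set (E d)), f x ∂(Measure.comap Subtype.val volume)
      = ∫ p : sphere (0:E d) 1 × Ioi (0:ℝ), f (p.2.1 • (p.1:E d))
          ∂((volume : Measure (E d)).toSphere.prod
            (Measure.volumeIoiPow (Module.finrank ℝ (E d) - 1))) := by
    rw [← MeasurePreserving.integral_comp
        ((volume : Measure (E d)).measurePreserving_homeomorphUnitSphereProd)
        (Homeomorph.measurableEmbedding _)
        (fun p : sphere (0:E d) 1 × Ioi (0:ℝ) => f (p.2.1 • (p.1 : E d)))]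
    congr 1; funext x
    simp [homeomorphUnitSphereProd, smul_inv_smul₀ (norm_ne_zero_iff.2 x.2)]
  rw [h1, h2, MeasureTheory.integral_prod _ (prod_integrable hd hf)]
  exact integral_congr_ae (Filter.Eventually.of_forall fun v => inner_radial_eq hd f v)

lemma polar_integrable (hd : d ≠ 0) {f : E d → F} (hf : Integrable f volume) :
    Integrable (fun v : sphere (0:E d) 1 => ∫ r in Ioi (0:ℝ), r ^ (d - 1) • f (r • (v : E d)))
      ((volume : Measure (E d)).toSphere) := by
  have h := (prod_integrable hd hf).integral_prod_left
  exact h.congr (Filter.Eventually.of_forall fun v => inner_radial_eq hd f v)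

lemma pow_est (n : ℕ) : ∀ {r : ℝ}, 0 ≤ r → r ≤ 2 → |r ^ n - 1| ≤ n * 2 ^ n * |r - 1| := by
  induction n with
  | zero => intro r h0 h2; simp
  | succ n ih =>
    intro r h0 h2
    have h1 : r ^ (n+1) - 1 = r ^ n * (r - 1) + (r ^ n - 1) := by ring
    have h3 : |r ^ n * (r - 1)| ≤ 2 ^ n * |r - 1| := by
      rw [abs_mul]
      have : |r ^ n| ≤ 2 ^ n := by
        rw [abs_of_nonneg (pow_nonneg h0 n)]
        exact pow_le_pow_left₀ h0 h2 n
      exact mul_le_mul_of_nonneg_right this (abs_nonneg _)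
    have h4 := ih h0 h2
    calc |r ^ (n+1) - 1| ≤ |r ^ n * (r - 1)| + |r ^ n - 1| := by rw [h1]; exact abs_add_le _ _
    _ ≤ 2 ^ n * |r - 1| + n * 2 ^ n * |r - 1| := by linarith
    _ ≤ (n+1 : ℕ) * 2 ^ (n+1) * |r - 1| := by
        have h5 := abs_nonneg (r - 1)
        have h6 : (0:ℝ) ≤ 2 ^ n := pow_nonneg zero_le_two n
        have h7 : (0:ℝ) ≤ (n:ℝ) := Nat.cast_nonneg n
        have h8 : (2:ℝ) ^ (n+1) = 2 * 2 ^ n := by ring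
        push_cast
        rw [h8]
        nlinarith [mul_nonneg (mul_nonneg h7 h6) h5, mul_nonneg h6 h5]

/-- Bounded continuous functions are integrable on the sphere measure. -/
lemma integrable_sphere_cont (hd : d ≠ 0) {W : Type*} [NormedAddCommGroup W]
    (G : E d → W) (hG : Continuous G) :
    Integrable (fun v : sphere (0:E d) 1 => G v) ((volume : Measure (E d)).toSphere) := by
  obtain ⟨C, hC⟩ := (isCompact_sphere (0:E d) 1).exists_bound_of_continuousOn hG.continuousOn
  refine Integrable.mono' (integrable_const C)
    (hG.comp continuous_subtype_val).aestronglyMeasurable ?_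
  exact Filter.Eventually.of_forall fun v => hC v v.2

lemma radial_set_eq (v : E d) (hv : ‖v‖ = 1) (a : E d) (ha : ‖a‖ ≤ 1/2) :
    Ioi (0:ℝ) ∩ {r : ℝ | r • v ∈ closedBall a 1}
      = Ioc 0 (⟪v, a⟫_ℝ + Real.sqrt (1 - ‖a‖^2 + ⟪v, a⟫_ℝ^2)) := by
  set b := ⟪v, a⟫_ℝ with hbdef
  have hb : |b| ≤ ‖a‖ := by
    calc |b| ≤ ‖v‖ * ‖a‖ := abs_real_inner_le_norm v a
    _ = ‖a‖ := by rw [hv, one_mul]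
  have ha0 : (0:ℝ) ≤ ‖a‖ := norm_nonneg a
  have hrad : (0:ℝ) ≤ 1 - ‖a‖^2 + b^2 := by nlinarith [sq_abs b, sq_nonneg b]
  set s := Real.sqrt (1 - ‖a‖^2 + b^2) with hs
  have hs2 : s^2 = 1 - ‖a‖^2 + b^2 := Real.sq_sqrt hrad
  have hs0 : 0 ≤ s := Real.sqrt_nonneg _
  have hsge : 3/4 ≤ s := by nlinarith [sq_abs b]
  ext r
  simp only [mem_inter_iff, mem_Ioi, mem_setOf_eq, Metric.mem_closedBall, mem_Ioc]
  rw [dist_eq_norm]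
  have hnorm : ‖r • v - a‖^2 = r^2 - 2*(r*b) + ‖a‖^2 := by
    rw [norm_sub_sq_real, norm_smul, real_inner_smul_left, ← hbdef]
    simp only [Real.norm_eq_abs, hv, mul_one]
    rw [sq_abs]
  have hbb := abs_le.1 hb
  have hb2 : b^2 ≤ ‖a‖^2 := by rw [← sq_abs]; exact pow_le_pow_left₀ (abs_nonneg b) hb 2
  constructor
  · rintro ⟨hr0, hr1⟩
    refine ⟨hr0, ?_⟩
    have h2 : ‖r • v - a‖^2 ≤ 1 := by
      nlinarith [mul_nonneg (by linarith : (0:ℝ) ≤ 1 - ‖r • v - a‖)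
        (by positivity : (0:ℝ) ≤ ‖r • v - a‖ + 1)]
    rw [hnorm] at h2
    nlinarith [hbb.1, hbb.2, hsge, hr0, hs0]
  · rintro ⟨hr0, hrle⟩
    refine ⟨hr0, ?_⟩
    have h2 : ‖r • v - a‖^2 ≤ 1 := by
      rw [hnorm]
      nlinarith [mul_nonneg (by linarith : (0:ℝ) ≤ s - (r - b))
        (by linarith [hbb.1, hbb.2] : (0:ℝ) ≤ s + (r - b))]
    nlinarith [norm_nonneg (r • v - a),
      mul_nonneg (norm_nonneg (r • v - a)) (norm_nonneg (r • v - a))]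

lemma key_est (z : E d → F) (L : ℝ≥0) (hz : LipschitzWith L z) (n : ℕ)
    (v : E d) (hv : ‖v‖ = 1) (a : E d) (ha : ‖a‖ ≤ 1/2) :
    ‖(∫ r in Ioc (0:ℝ) (⟪v, a⟫_ℝ + Real.sqrt (1 - ‖a‖^2 + ⟪v, a⟫_ℝ^2)), r ^ n • z (r • v))
      - (∫ r in Ioc (0:ℝ) 1, r ^ n • z (r • v)) - ⟪v, a⟫_ℝ • z v‖
      ≤ ((‖z 0‖ + L) + 4 * (2^n * L + n * 2^n * (‖z 0‖ + L))) * ‖a‖^2 := by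
  set b := ⟪v, a⟫_ℝ with hbdef
  set M : ℝ := ‖z 0‖ + L with hM
  set K : ℝ := 2^n * L + n * 2^n * M with hK
  have hb : |b| ≤ ‖a‖ := by
    calc |b| ≤ ‖v‖ * ‖a‖ := abs_real_inner_le_norm v a
    _ = ‖a‖ := by rw [hv, one_mul]
  have ha0 : (0:ℝ) ≤ ‖a‖ := norm_nonneg a
  have hb2 : b^2 ≤ ‖a‖^2 := by rw [← sq_abs]; exact pow_le_pow_left₀ (abs_nonneg b) hb 2
  have hrad : (0:ℝ) ≤ 1 - ‖a‖^2 + b^2 := by nlinarith [sq_nonneg b]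
  set s := Real.sqrt (1 - ‖a‖^2 + b^2) with hs
  have hs2 : s^2 = 1 - ‖a‖^2 + b^2 := Real.sq_sqrt hrad
  have hs0 : 0 ≤ s := Real.sqrt_nonneg _
  have hsge : 3/4 ≤ s := by nlinarith
  have hsle : s ≤ 1 := by nlinarith
  set ρ : ℝ := b + s with hρ
  have hρ0 : 0 ≤ ρ := by have := abs_le.1 hb; simp only [hρ]; linarith
  have hρ2 : ρ ≤ 2 := by have := abs_le.1 hb; simp only [hρ]; linarith
  have hρ4 : 1/4 ≤ ρ := by have := abs_le.1 hb; simp only [hρ]; linarith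
  have hsm1 : |s - 1| ≤ ‖a‖^2 := by
    rw [abs_of_nonpos (by linarith)]
    nlinarith [sq_nonneg b]
  have hρ1 : |ρ - 1| ≤ 2 * ‖a‖ := by
    have h1 : ρ - 1 = b + (s - 1) := by rw [hρ]; ring
    rw [h1]
    calc |b + (s-1)| ≤ |b| + |s - 1| := abs_add_le _ _
    _ ≤ ‖a‖ + ‖a‖^2 := by linarith
    _ ≤ 2 * ‖a‖ := by nlinarith
  have hzlip : ∀ u w : E d, ‖z u - z w‖ ≤ L * ‖u - w‖ := fun u w => by
    have := hz.dist_le_mul u w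
    rwa [dist_eq_norm, dist_eq_norm] at this
  have hzv : ‖z v‖ ≤ M := by
    have h1 := hzlip v 0
    have h2 : ‖v - 0‖ = 1 := by rw [sub_zero, hv]
    rw [h2, mul_one] at h1
    calc ‖z v‖ ≤ ‖z v - z 0‖ + ‖z 0‖ := by
          have := norm_add_le (z v - z 0) (z 0); simpa using this
    _ ≤ M := by rw [hM]; linarith
  have hL0 : (0:ℝ) ≤ L := L.coe_nonneg
  have hM0 : (0:ℝ) ≤ M := le_trans (norm_nonneg _) hzv
  have hcont : Continuous (fun r : ℝ => r ^ n • z (r • v)) :=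
    (continuous_pow n).smul (hz.continuous.comp (continuous_id.smul continuous_const))
  have hii : ∀ x y : ℝ, IntervalIntegrable (fun r => r ^ n • z (r • v)) volume x y :=
    fun x y => hcont.intervalIntegrable x y
  rw [← intervalIntegral.integral_of_le hρ0, ← intervalIntegral.integral_of_le zero_le_one,
    intervalIntegral.integral_interval_sub_left (hii 0 ρ) (hii 0 1)]
  have hconst : (∫ r in (1:ℝ)..ρ, z v) = (ρ - 1) • z v := by
    rw [intervalIntegral.integral_const]
  have hsplit : (∫ r in (1:ℝ)..ρ, r ^ n • z (r • v)) - b • z v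
      = (∫ r in (1:ℝ)..ρ, (r ^ n • z (r • v) - z v)) + ((ρ - 1) - b) • z v := by
    rw [intervalIntegral.integral_sub (hii 1 ρ) (intervalIntegrable_const), hconst]
    module
  rw [hsplit]
  have hbound : ∀ r ∈ Set.uIoc (1:ℝ) ρ, ‖r ^ n • z (r • v) - z v‖ ≤ K * (2 * ‖a‖) := by
    intro r hr
    have hcases := Set.mem_uIoc.1 hr
    have hr02 : 0 ≤ r ∧ r ≤ 2 ∧ |r - 1| ≤ |ρ - 1| := by
      rcases hcases with ⟨h1, h2⟩ | ⟨h1, h2⟩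
      · refine ⟨by linarith, by linarith, ?_⟩
        rw [abs_of_nonneg (by linarith), abs_of_nonneg (by linarith)]; linarith
      · refine ⟨by linarith, by linarith, ?_⟩
        rw [abs_of_nonpos (by linarith), abs_of_nonpos (by linarith)]; linarith
    obtain ⟨h0r, h2r, hr1⟩ := hr02
    have hdec : r ^ n • z (r • v) - z v = r ^ n • (z (r • v) - z v) + (r ^ n - 1) • z v := by
      rw [smul_sub, sub_smul, one_smul]; abel
    rw [hdec]
    have hrn : |r ^ n| ≤ 2 ^ n := by
      rw [abs_of_nonneg (pow_nonneg h0r n)]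
      exact pow_le_pow_left₀ h0r h2r n
    have hzd : ‖z (r • v) - z v‖ ≤ L * |r - 1| := by
      have h1 := hzlip (r • v) v
      have h2 : ‖r • v - v‖ = |r - 1| := by
        have : r • v - v = (r - 1) • v := by rw [sub_smul, one_smul]
        rw [this, norm_smul, hv, mul_one, Real.norm_eq_abs]
      rwa [h2] at h1
    have hpow := pow_est n h0r h2r
    have hterm1 : ‖r ^ n • (z (r • v) - z v)‖ ≤ 2 ^ n * (L * |r - 1|) := by
      rw [norm_smul, Real.norm_eq_abs]
      exact mul_le_mul hrn hzd (norm_nonneg _) (by positivity)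
    have hterm2 : ‖(r ^ n - 1) • z v‖ ≤ (n * 2 ^ n * |r - 1|) * M := by
      rw [norm_smul, Real.norm_eq_abs]
      exact mul_le_mul hpow hzv (norm_nonneg _) (by positivity)
    calc ‖r ^ n • (z (r • v) - z v) + (r ^ n - 1) • z v‖
        ≤ ‖r ^ n • (z (r • v) - z v)‖ + ‖(r ^ n - 1) • z v‖ := norm_add_le _ _
    _ ≤ 2 ^ n * (L * |r - 1|) + (n * 2 ^ n * |r - 1|) * M := by linarith
    _ = K * |r - 1| := by rw [hK]; ring
    _ ≤ K * (2 * ‖a‖) := by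
        have hK0 : 0 ≤ K := by positivity
        have : |r - 1| ≤ 2 * ‖a‖ := le_trans hr1 hρ1
        exact mul_le_mul_of_nonneg_left this hK0
  have hX : ‖∫ r in (1:ℝ)..ρ, (r ^ n • z (r • v) - z v)‖ ≤ (K * (2 * ‖a‖)) * |ρ - 1| :=
    intervalIntegral.norm_integral_le_of_norm_le_const hbound
  have hY : ‖((ρ - 1) - b) • z v‖ ≤ ‖a‖^2 * M := by
    rw [norm_smul, Real.norm_eq_abs]
    have h1 : (ρ - 1) - b = s - 1 := by rw [hρ]; ring
    rw [h1]
    exact mul_le_mul hsm1 hzv (norm_nonneg _) (by positivity)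
  have hK0 : 0 ≤ K := by positivity
  calc ‖(∫ r in (1:ℝ)..ρ, (r ^ n • z (r • v) - z v)) + ((ρ - 1) - b) • z v‖
      ≤ ‖∫ r in (1:ℝ)..ρ, (r ^ n • z (r • v) - z v)‖ + ‖((ρ - 1) - b) • z v‖ := norm_add_le _ _
  _ ≤ (K * (2 * ‖a‖)) * (2 * ‖a‖) + ‖a‖^2 * M := by
      have := mul_le_mul_of_nonneg_left hρ1 (by positivity : (0:ℝ) ≤ K * (2 * ‖a‖))
      linarith
  _ = (M + 4 * K) * ‖a‖^2 := by ring

lemma ball_repr (hd : d ≠ 0) (z : E d → F) (L : ℝ≥0) (hz : LipschitzWith L z)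
    (a : E d) (ha : ‖a‖ ≤ 1/2) :
    (∫ u in closedBall (0:E d) 1, z (a + u))
      = ∫ v : sphere (0:E d) 1,
          (∫ r in Ioc (0:ℝ) (⟪(v:E d), a⟫_ℝ + Real.sqrt (1 - ‖a‖^2 + ⟪(v:E d), a⟫_ℝ^2)),
            r ^ (d-1) • z (r • (v:E d))) ∂((volume : Measure (E d)).toSphere) := by
  have hind : Integrable ((closedBall a 1).indicator z) volume :=
    IntegrableOn.integrable_indicator
      (hz.continuous.continuousOn.integrableOn_compact (isCompact_closedBall a 1)) measurableSet_closedBall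
  have h1 : (∫ u in closedBall (0:E d) 1, z (a + u)) = ∫ u, (closedBall a 1).indicator z u := by
    rw [← integral_indicator measurableSet_closedBall]
    rw [← integral_sub_right_eq_self ((closedBall (0:E d) 1).indicator fun u => z (a + u)) a]
    congr 1; funext x
    by_cases hx : ‖x - a‖ ≤ 1
    · rw [indicator_of_mem (mem_closedBall_zero_iff.2 hx),
        indicator_of_mem (mem_closedBall_iff_norm.2 hx)]
      congr 1; abel
    · rw [indicator_of_notMem (fun h => hx (mem_closedBall_zero_iff.1 h)),
        indicator_of_notMem (fun h => hx (mem_closedBall_iff_norm.1 h))]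
  rw [h1, polar_integral hd hind]
  refine integral_congr_ae (Filter.Eventually.of_forall fun v => ?_)
  have hv : ‖(v:E d)‖ = 1 := mem_sphere_zero_iff_norm.1 v.2
  have hmeas : MeasurableSet {r : ℝ | r • (v:E d) ∈ closedBall a 1} :=
    (continuous_id.smul continuous_const).measurable measurableSet_closedBall
  have h2 : ∀ r : ℝ, r ^ (d-1) • (closedBall a 1).indicator z (r • (v:E d))
      = {r : ℝ | r • (v:E d) ∈ closedBall a 1}.indicator
          (fun r => r ^ (d-1) • z (r • (v:E d))) r := by
    intro r
    by_cases hr : r • (v:E d) ∈ closedBall a 1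
    · rw [Set.indicator_of_mem hr,
        Set.indicator_of_mem (show r ∈ {r:ℝ | r • (v:E d) ∈ closedBall a 1} from hr)]
    · rw [Set.indicator_of_notMem hr,
        Set.indicator_of_notMem (show r ∉ {r:ℝ | r • (v:E d) ∈ closedBall a 1} from hr),
        smul_zero]
  calc (∫ r in Ioi (0:ℝ), r ^ (d-1) • (closedBall a 1).indicator z (r • (v:E d)))
      = ∫ r in Ioi (0:ℝ), {r : ℝ | r • (v:E d) ∈ closedBall a 1}.indicator
          (fun r => r ^ (d-1) • z (r • (v:E d))) r := by
        exact setIntegral_congr_fun measurableSet_Ioi (fun r _ => h2 r)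
  _ = ∫ r in Ioi (0:ℝ) ∩ {r : ℝ | r • (v:E d) ∈ closedBall a 1},
        r ^ (d-1) • z (r • (v:E d)) := setIntegral_indicator hmeas
  _ = ∫ r in Ioc (0:ℝ) (⟪(v:E d), a⟫_ℝ + Real.sqrt (1 - ‖a‖^2 + ⟪(v:E d), a⟫_ℝ^2)),
        r ^ (d-1) • z (r • (v:E d)) := by rw [radial_set_eq (v:E d) hv a ha]

lemma ball_repr_integrable (hd : d ≠ 0) (z : E d → F) (L : ℝ≥0) (hz : LipschitzWith L z)
    (a : E d) (ha : ‖a‖ ≤ 1/2) :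
    Integrable (fun v : sphere (0:E d) 1 =>
        ∫ r in Ioc (0:ℝ) (⟪(v:E d), a⟫_ℝ + Real.sqrt (1 - ‖a‖^2 + ⟪(v:E d), a⟫_ℝ^2)),
          r ^ (d-1) • z (r • (v:E d))) ((volume : Measure (E d)).toSphere) := by
  have hind : Integrable ((closedBall a 1).indicator z) volume :=
    IntegrableOn.integrable_indicator
      (hz.continuous.continuousOn.integrableOn_compact (isCompact_closedBall a 1)) measurableSet_closedBall
  refine (polar_integrable hd hind).congr (Filter.Eventually.of_forall fun v => ?_)
  have hv : ‖(v:E d)‖ = 1 := mem_sphere_zero_iff_norm.1 v.2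
  have hmeas : MeasurableSet {r : ℝ | r • (v:E d) ∈ closedBall a 1} :=
    (continuous_id.smul continuous_const).measurable measurableSet_closedBall
  have h2 : ∀ r : ℝ, r ^ (d-1) • (closedBall a 1).indicator z (r • (v:E d))
      = {r : ℝ | r • (v:E d) ∈ closedBall a 1}.indicator
          (fun r => r ^ (d-1) • z (r • (v:E d))) r := by
    intro r
    by_cases hr : r • (v:E d) ∈ closedBall a 1
    · rw [Set.indicator_of_mem hr,
        Set.indicator_of_mem (show r ∈ {r:ℝ | r • (v:E d) ∈ closedBall a 1} from hr)]
    · rw [Set.indicator_of_notMem hr,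
        Set.indicator_of_notMem (show r ∉ {r:ℝ | r • (v:E d) ∈ closedBall a 1} from hr),
        smul_zero]
  calc (∫ r in Ioi (0:ℝ), r ^ (d-1) • (closedBall a 1).indicator z (r • (v:E d)))
      = ∫ r in Ioi (0:ℝ), {r : ℝ | r • (v:E d) ∈ closedBall a 1}.indicator
          (fun r => r ^ (d-1) • z (r • (v:E d))) r :=
        setIntegral_congr_fun measurableSet_Ioi (fun r _ => h2 r)
  _ = ∫ r in Ioi (0:ℝ) ∩ {r : ℝ | r • (v:E d) ∈ closedBall a 1},
        r ^ (d-1) • z (r • (v:E d)) := setIntegral_indicator hmeas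
  _ = ∫ r in Ioc (0:ℝ) (⟪(v:E d), a⟫_ℝ + Real.sqrt (1 - ‖a‖^2 + ⟪(v:E d), a⟫_ℝ^2)),
        r ^ (d-1) • z (r • (v:E d)) := by rw [radial_set_eq (v:E d) hv a ha]

lemma hasFDerivAt_ballavg (hd : d ≠ 0) (z : E d → F) (L : ℝ≥0) (hz : LipschitzWith L z) :
    HasFDerivAt (fun a : E d => ∫ u in closedBall (0:E d) 1, z (a + u))
      (∫ v : sphere (0:E d) 1, ((innerSL ℝ (v:E d)).smulRight (z v))
        ∂((volume : Measure (E d)).toSphere)) 0 := by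
  haveI := aux_nontrivial hd
  set σ := (volume : Measure (E d)).toSphere with hσ
  have hTcont : Continuous fun u : E d => (innerSL ℝ u).smulRight (z u) :=
    (ContinuousLinearMap.smulRightL ℝ (E d) F).continuous₂.comp
      ((innerSL ℝ).continuous.prodMk hz.continuous)
  have hTint : Integrable (fun v : sphere (0:E d) 1 => (innerSL ℝ (v:E d)).smulRight (z v)) σ :=
    integrable_sphere_cont hd _ hTcont
  set T : E d →L[ℝ] F := ∫ v : sphere (0:E d) 1, ((innerSL ℝ (v:E d)).smulRight (z v)) ∂σ with hT
  set C0 : ℝ := ((‖z 0‖ + L) + 4 * (2^(d-1) * L + ((d-1 : ℕ) : ℝ) * 2^(d-1) * (‖z 0‖ + L))) with hC0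
  have hC00 : 0 ≤ C0 := by positivity
  set C : ℝ := C0 * (σ univ).toReal with hC
  have hCnn : 0 ≤ C := mul_nonneg hC00 ENNReal.toReal_nonneg
  have key : ∀ a : E d, ‖a‖ ≤ 1/2 →
      ‖(∫ u in closedBall (0:E d) 1, z (a + u))
        - (∫ u in closedBall (0:E d) 1, z ((0:E d) + u)) - T a‖ ≤ C * ‖a‖^2 := by
    intro a ha
    have h0 : ‖(0:E d)‖ ≤ 1/2 := by rw [norm_zero]; norm_num
    have hrep0 : (∫ u in closedBall (0:E d) 1, z ((0:E d) + u))
        = ∫ v : sphere (0:E d) 1, (∫ r in Ioc (0:ℝ) 1, r ^ (d-1) • z (r • (v:E d))) ∂σ := by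
      rw [ball_repr hd z L hz 0 h0]
      refine integral_congr_ae (Filter.Eventually.of_forall fun v => ?_)
      norm_num
    have hTa : T a = ∫ v : sphere (0:E d) 1, ⟪(v:E d), a⟫_ℝ • z (v:E d) ∂σ := by
      rw [hT, ContinuousLinearMap.integral_apply hTint a]
      refine integral_congr_ae (Filter.Eventually.of_forall fun v => ?_)
      simp only [ContinuousLinearMap.smulRight_apply, innerSL_apply_apply]
    have hint1 := ball_repr_integrable hd z L hz a ha
    have hint0' := ball_repr_integrable hd z L hz 0 h0
    have hint0 : Integrable
        (fun v : sphere (0:E d) 1 => ∫ r in Ioc (0:ℝ) 1, r ^ (d-1) • z (r • (v:E d))) σ := by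
      refine hint0'.congr (Filter.Eventually.of_forall fun v => ?_)
      norm_num
    have hintl : Integrable (fun v : sphere (0:E d) 1 => ⟪(v:E d), a⟫_ℝ • z (v:E d)) σ :=
      integrable_sphere_cont hd (fun u => ⟪u, a⟫_ℝ • z u)
        ((continuous_id.inner continuous_const).smul hz.continuous)
    have hsplit2 : (∫ v : sphere (0:E d) 1,
          ((∫ r in Ioc (0:ℝ) (⟪(v:E d), a⟫_ℝ + Real.sqrt (1 - ‖a‖^2 + ⟪(v:E d), a⟫_ℝ^2)),
            r ^ (d-1) • z (r • (v:E d)))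
          - (∫ r in Ioc (0:ℝ) 1, r ^ (d-1) • z (r • (v:E d)))
          - ⟪(v:E d), a⟫_ℝ • z (v:E d)) ∂σ)
        = (∫ v : sphere (0:E d) 1, (∫ r in Ioc (0:ℝ)
              (⟪(v:E d), a⟫_ℝ + Real.sqrt (1 - ‖a‖^2 + ⟪(v:E d), a⟫_ℝ^2)),
              r ^ (d-1) • z (r • (v:E d))) ∂σ)
          - (∫ v : sphere (0:E d) 1, (∫ r in Ioc (0:ℝ) 1, r ^ (d-1) • z (r • (v:E d))) ∂σ)
          - (∫ v : sphere (0:E d) 1, ⟪(v:E d), a⟫_ℝ • z (v:E d) ∂σ) := by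
      have hint_sub : Integrable (fun v : sphere (0:E d) 1 =>
          (∫ r in Ioc (0:ℝ) (⟪(v:E d), a⟫_ℝ + Real.sqrt (1 - ‖a‖^2 + ⟪(v:E d), a⟫_ℝ^2)),
            r ^ (d-1) • z (r • (v:E d)))
          - (∫ r in Ioc (0:ℝ) 1, r ^ (d-1) • z (r • (v:E d)))) σ := hint1.sub hint0
      rw [integral_sub hint_sub hintl, integral_sub hint1 hint0]
    rw [ball_repr hd z L hz a ha, hrep0, hTa, ← hsplit2]
    have hptw : ∀ v : sphere (0:E d) 1,
        ‖(∫ r in Ioc (0:ℝ) (⟪(v:E d), a⟫_ℝ + Real.sqrt (1 - ‖a‖^2 + ⟪(v:E d), a⟫_ℝ^2)),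
            r ^ (d-1) • z (r • (v:E d)))
          - (∫ r in Ioc (0:ℝ) 1, r ^ (d-1) • z (r • (v:E d)))
          - ⟪(v:E d), a⟫_ℝ • z (v:E d)‖ ≤ C0 * ‖a‖^2 := fun v =>
      key_est z L hz (d-1) (v:E d) (mem_sphere_zero_iff_norm.1 v.2) a ha
    calc ‖∫ v : sphere (0:E d) 1, ((∫ r in Ioc (0:ℝ)
            (⟪(v:E d), a⟫_ℝ + Real.sqrt (1 - ‖a‖^2 + ⟪(v:E d), a⟫_ℝ^2)),
            r ^ (d-1) • z (r • (v:E d)))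
          - (∫ r in Ioc (0:ℝ) 1, r ^ (d-1) • z (r • (v:E d)))
          - ⟪(v:E d), a⟫_ℝ • z (v:E d)) ∂σ‖
        ≤ (C0 * ‖a‖^2) * (σ univ).toReal :=
          norm_integral_le_of_norm_le_const (Filter.Eventually.of_forall hptw)
    _ = C * ‖a‖^2 := by rw [hC]; ring
  rw [hasFDerivAt_iff_isLittleO_nhds_zero]
  rw [Asymptotics.isLittleO_iff]
  intro c hc
  have hδ : 0 < min (1/2) (c / (C + 1)) := by
    apply lt_min (by norm_num)
    positivity
  filter_upwards [Metric.ball_mem_nhds (0:E d) hδ] with a ha'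
  have ha'' : ‖a‖ < min (1/2) (c / (C + 1)) := by
    rwa [mem_ball_zero_iff] at ha'
  have ha1 : ‖a‖ ≤ 1/2 := le_of_lt (lt_of_lt_of_le ha'' (min_le_left _ _))
  have ha2 : ‖a‖ ≤ c / (C + 1) := le_of_lt (lt_of_lt_of_le ha'' (min_le_right _ _))
  have hk := key a ha1
  simp only [zero_add] at hk ⊢
  refine le_trans hk ?_
  have hn0 : 0 ≤ ‖a‖ := norm_nonneg a
  have hC1 : 0 < C + 1 := by linarith
  have h1 : C * ‖a‖ ≤ C * (c / (C + 1)) := mul_le_mul_of_nonneg_left ha2 hCnn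
  have h2 : C * (c / (C + 1)) ≤ c := by
    rw [mul_comm, div_mul_eq_mul_div, div_le_iff₀ hC1]
    nlinarith
  nlinarith [sq_nonneg ‖a‖]

/-- The sphere measure pushed to the ambient space is invariant under negation. -/
lemma map_neg_sphereM :
    Measure.map (fun u : E d => -u)
        (Measure.map Subtype.val ((volume : Measure (E d)).toSphere))
      = Measure.map Subtype.val ((volume : Measure (E d)).toSphere) := by
  set M := Measure.map (Subtype.val : sphere (0:E d) 1 → E d)
      ((volume : Measure (E d)).toSphere) with hM
  have haux : ∀ t : Set (E d), MeasurableSet t →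
      M t = (Module.finrank ℝ (E d) : ℝ≥0∞) *
        volume (Ioo (0:ℝ) 1 • (sphere (0:E d) 1 ∩ t)) := by
    intro t ht
    rw [hM, Measure.map_apply measurable_subtype_coe ht,
      Measure.toSphere_apply' _ (measurable_subtype_coe ht),
      Subtype.image_preimage_coe]
  refine Measure.ext fun s hs => ?_
  rw [Measure.map_apply measurable_neg hs, haux _ (measurable_neg hs), haux _ hs]
  congr 1
  have h1 : sphere (0:E d) 1 ∩ (Neg.neg ⁻¹' s) = -(sphere (0:E d) 1 ∩ s) := by
    ext u
    simp only [Set.mem_inter_iff, Set.mem_preimage, Set.mem_neg, mem_sphere_zero_iff_norm,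
      norm_neg]
  have h2 : Ioo (0:ℝ) 1 • (-(sphere (0:E d) 1 ∩ s)) = -(Ioo (0:ℝ) 1 • (sphere (0:E d) 1 ∩ s)) := by
    ext u
    simp only [Set.mem_smul, Set.mem_neg]
    constructor
    · rintro ⟨r, hr, b, hb, rfl⟩
      exact ⟨r, hr, -b, by simpa using hb, by simp⟩
    · rintro ⟨r, hr, b, hb, hu⟩
      refine ⟨r, hr, -b, by simpa using hb, ?_⟩
      rw [smul_neg, hu]; simp
  rw [h1, h2, Measure.measure_neg]


/-- the two-point finite-difference matrix
`H(v) = (d_x/2μ)(y*(x+μv) − y*(x−μv)) vᵀ` (as a linear map, `w ↦ (d_x/2μ)⟪v,w⟫ • (…)`)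
is an unbiased estimator of the Jacobian of the smoothed response:
`E_v[H(v)] = (d_x/μ) E_v[y*(x+μv) vᵀ] = Jac y_μ(x)`. -/
theorem stmt8 (dx dy : ℕ) (ystar : E dx → E dy) (Ly : ℝ≥0)
    (hLip : LipschitzWith Ly ystar) (μ : ℝ) (hμ : 0 < μ) (x : E dx) :
    (∫ v, (((dx : ℝ) / (2 * μ)) •
        ((innerSL ℝ v).smulRight (ystar (x + μ • v) - ystar (x - μ • v))))
        ∂(uniformSphere dx))
      = ((dx : ℝ) / μ) •
          ∫ v, (innerSL ℝ v).smulRight (ystar (x + μ • v)) ∂(uniformSphere dx) ∧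
    (∫ v, (((dx : ℝ) / (2 * μ)) •
        ((innerSL ℝ v).smulRight (ystar (x + μ • v) - ystar (x - μ • v))))
        ∂(uniformSphere dx))
      = fderiv ℝ (ymu ystar μ) x := by
  rcases Nat.eq_zero_or_pos dx with h0 | hposn
  · subst h0
    have hfin0 : Module.finrank ℝ (E 0) = 0 := by rw [finrank_euclideanSpace_fin]
    have hσ0 : (volume : Measure (E 0)).toSphere = 0 := by
      rw [Measure.toSphere, hfin0, zero_smul]
    have hus : uniformSphere 0 = 0 := by
      rw [uniformSphere, hσ0]
      simp
    rw [hus]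
    simp only [integral_zero_measure]
    refine ⟨(ContinuousLinearMap.ext fun w => by simp).symm, ?_⟩
    haveI : Subsingleton (E 0) := ⟨fun a b => PiLp.ext fun i => i.elim0⟩
    have hzero : fderiv ℝ (ymu ystar μ) x = 0 := by
      ext w
      have hw : w = 0 := Subsingleton.elim w 0
      rw [hw]
      simp
    exact hzero.symm
  · have hd : dx ≠ 0 := hposn.ne'
    haveI := aux_nontrivial hd
    set σ' := (volume : Measure (E dx)).toSphere with hσ'
    set M := Measure.map (Subtype.val : sphere (0:E dx) 1 → E dx) σ' with hMdef
    set z : E dx → E dy := fun v => ystar (x + μ • v) with hzdef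
    have hμ0 : μ ≠ 0 := ne_of_gt hμ
    have hzlip : LipschitzWith (Ly * ‖μ‖₊) z := by
      have h1 : LipschitzWith ‖μ‖₊ (fun v : E dx => x + μ • v) := by
        refine LipschitzWith.of_dist_le_mul fun u w => ?_
        rw [dist_eq_norm, dist_eq_norm]
        have he : (x + μ • u) - (x + μ • w) = μ • (u - w) := by
          rw [smul_sub]; abel
        rw [he, norm_smul]
        exact le_of_eq (by rw [coe_nnnorm])
      exact hLip.comp h1
    have hT := hasFDerivAt_ballavg hd z (Ly * ‖μ‖₊) hzlip
    set T : E dx →L[ℝ] E dy :=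
      ∫ v : sphere (0:E dx) 1, ((innerSL ℝ (v:E dx)).smulRight (z (v:E dx))) ∂σ' with hTdef
    have haff : HasFDerivAt (fun x' : E dx => μ⁻¹ • (x' - x))
        (μ⁻¹ • ContinuousLinearMap.id ℝ (E dx)) x :=
      ((hasFDerivAt_id x).sub_const x).const_smul μ⁻¹
    have hTpt : HasFDerivAt (fun a : E dx => ∫ u in closedBall (0:E dx) 1, z (a + u)) T
        ((fun x' : E dx => μ⁻¹ • (x' - x)) x) := by
      have h0 : (fun x' : E dx => μ⁻¹ • (x' - x)) x = 0 := by simp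
      rw [h0]; exact hT
    have hcomp := hTpt.comp x haff
    have hfun : ((fun a : E dx => ∫ u in closedBall (0:E dx) 1, z (a + u)) ∘
        (fun x' : E dx => μ⁻¹ • (x' - x)))
        = fun x' : E dx => ∫ u in closedBall (0:E dx) 1, ystar (x' + μ • u) := by
      funext x'
      simp only [Function.comp_apply, hzdef]
      congr 1
      funext u
      congr 1
      rw [smul_add, smul_inv_smul₀ hμ0]
      abel
    rw [hfun] at hcomp
    have hTcomp : T.comp (μ⁻¹ • ContinuousLinearMap.id ℝ (E dx)) = μ⁻¹ • T := by
      ext w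
      simp [ContinuousLinearMap.comp_apply, ContinuousLinearMap.smul_apply, _root_.map_smul]
    rw [hTcomp] at hcomp
    set c1 : ℝ := ((volume (closedBall (0:E dx) 1))⁻¹).toReal with hc1
    have hymu : ymu ystar μ
        = fun x' => c1 • ∫ u in closedBall (0:E dx) 1, ystar (x' + μ • u) := by
      funext x'
      simp only [ymu, uniformBall, integral_smul_measure, hc1]
    have hFD : HasFDerivAt (ymu ystar μ) ((c1 * μ⁻¹) • T) x := by
      rw [hymu]
      have h2 := hcomp.const_smul c1
      rwa [smul_smul] at h2
    have hfderiv : fderiv ℝ (ymu ystar μ) x = (c1 * μ⁻¹) • T := hFD.fderiv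
    set Fint : E dx → (E dx →L[ℝ] E dy) :=
      fun u => (innerSL ℝ u).smulRight (ystar (x + μ • u)) with hFint
    set Gint : E dx → (E dx →L[ℝ] E dy) :=
      fun u => (innerSL ℝ u).smulRight (ystar (x - μ • u)) with hGint
    have hFcont : Continuous Fint :=
      (ContinuousLinearMap.smulRightL ℝ (E dx) (E dy)).continuous₂.comp
        ((innerSL ℝ).continuous.prodMk (hLip.continuous.comp
          (continuous_const.add (continuous_id.const_smul μ))))
    have hGcont : Continuous Gint :=
      (ContinuousLinearMap.smulRightL ℝ (E dx) (E dy)).continuous₂.comp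
        ((innerSL ℝ).continuous.prodMk (hLip.continuous.comp
          (continuous_const.sub (continuous_id.const_smul μ))))
    have hmap : ∀ (G : E dx → (E dx →L[ℝ] E dy)), Continuous G →
        ∫ v, G v ∂M = ∫ v : sphere (0:E dx) 1, G (v:E dx) ∂σ' := fun G hG => by
      rw [hMdef]
      exact integral_map measurable_subtype_coe.aemeasurable hG.aestronglyMeasurable
    have hintF_M : Integrable Fint M := by
      rw [hMdef]
      refine (MeasurableEmbedding.integrable_map_iff
        (MeasurableEmbedding.subtype_coe isClosed_sphere.measurableSet)).2 ?_
      exact integrable_sphere_cont hd Fint hFcont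
    have hintG_M : Integrable Gint M := by
      rw [hMdef]
      refine (MeasurableEmbedding.integrable_map_iff
        (MeasurableEmbedding.subtype_coe isClosed_sphere.measurableSet)).2 ?_
      exact integrable_sphere_cont hd Gint hGcont
    have hneg : ∫ v, Gint v ∂M = - ∫ v, Fint v ∂M := by
      have h1 : ∫ v, Gint v ∂M = ∫ v, Gint (-v) ∂M := by
        rw [hMdef]
        conv_lhs => rw [← map_neg_sphereM (d := dx)]
        rw [integral_map measurable_neg.aemeasurable hGcont.aestronglyMeasurable]
      have h2 : ∀ v : E dx, Gint (-v) = - Fint v := by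
        intro v
        ext w
        simp only [hGint, hFint, ContinuousLinearMap.smulRight_apply, innerSL_apply_apply,
          ContinuousLinearMap.neg_apply, inner_neg_left, neg_smul, smul_neg, sub_neg_eq_add]
      calc ∫ v, Gint v ∂M = ∫ v, Gint (-v) ∂M := h1
      _ = ∫ v, -(Fint v) ∂M := integral_congr_ae (Filter.Eventually.of_forall h2)
      _ = - ∫ v, Fint v ∂M := integral_neg _
    have hintegrand : ∀ v : E dx, ((dx : ℝ) / (2 * μ)) •
        ((innerSL ℝ v).smulRight (ystar (x + μ • v) - ystar (x - μ • v)))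
        = ((dx : ℝ) / (2 * μ)) • (Fint v - Gint v) := by
      intro v
      congr 1
      ext w
      simp only [hFint, hGint, ContinuousLinearMap.smulRight_apply, innerSL_apply_apply,
        ContinuousLinearMap.sub_apply, smul_sub]
    have hLHSM : ∫ v, (((dx : ℝ) / (2 * μ)) •
        ((innerSL ℝ v).smulRight (ystar (x + μ • v) - ystar (x - μ • v)))) ∂M
        = ((dx : ℝ) / μ) • ∫ v, Fint v ∂M := by
      rw [integral_congr_ae (Filter.Eventually.of_forall hintegrand), integral_smul,
        integral_sub hintF_M hintG_M, hneg, sub_neg_eq_add,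
        ← two_smul ℝ (∫ v, Fint v ∂M), smul_smul]
      congr 1
      field_simp
    have hus_int : ∀ (G : E dx → (E dx →L[ℝ] E dy)),
        ∫ v, G v ∂(uniformSphere dx) = ((σ' univ)⁻¹).toReal • ∫ v, G v ∂M := by
      intro G
      rw [uniformSphere, integral_smul_measure]
    constructor
    · rw [hus_int, hus_int, hLHSM]
      exact smul_comm _ _ _
    · rw [hus_int, hLHSM, hfderiv]
      have hFT : ∫ v, Fint v ∂M = T := by
        rw [hmap Fint hFcont, hTdef]
      rw [hFT, smul_smul]
      congr 1
      have huniv : σ' univ = (dx : ℝ≥0∞) * volume (ball (0:E dx) 1) := by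
        rw [hσ', Measure.toSphere_apply_univ, finrank_euclideanSpace_fin]
      have hcb : volume (closedBall (0:E dx) 1) = volume (ball (0:E dx) 1) :=
        Measure.addHaar_closedBall_eq_addHaar_ball (μ := volume) (0:E dx) 1
      have hV0 : volume (ball (0:E dx) 1) ≠ 0 := (measure_ball_pos volume 0 one_pos).ne'
      have hVtop : volume (ball (0:E dx) 1) ≠ ⊤ := measure_ball_lt_top.ne
      rw [huniv, hc1, hcb, ENNReal.toReal_inv, ENNReal.toReal_inv, ENNReal.toReal_mul,
        ENNReal.toReal_natCast]
      have hvb0 : (volume (ball (0:E dx) 1)).toReal ≠ 0 :=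
        ENNReal.toReal_ne_zero.2 ⟨hV0, hVtop⟩
      have hdx0 : (dx:ℝ) ≠ 0 := Nat.cast_ne_zero.2 hd
      field_simp

end Aux
end
end
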